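/- arXiv:2408.04890 — 5 statements merged into one kernel-verified Lean document; each statement's English description precedes it below -/
import Mathlib

section
/- For Φ(t) = tᵖ ln(1+t) with p ≥ 1, the Orlicz indices are p⁻_Φ = p and p⁺_Φ = p+1. -/
open MeasureTheory Real Set Filter
open scoped ENNReal

/-- An Orlicz function, given by its right-continuous derivative `phi`. -/
structure OrliczFunction where
  phi : ℝ → ℝ
  mono : MonotoneOn phi (Set.Ici 0)
  rightCont : ∀ t, 0 ≤ t → ContinuousWithinAt phi (Set.Ici t) t
  map_zero : phi 0 = 0
  pos : ∀ t, 0 < t → 0 < phi t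
  tendsto_atTop : Filter.Tendsto phi Filter.atTop Filter.atTop
  delta2 : ∃ C > 0, ∀ t, 0 ≤ t →
    (∫ s in (0:ℝ)..(2 * t), phi s) ≤ C * ∫ s in (0:ℝ)..t, phi s

/-- The Orlicz function itself: `Φ(t) = ∫₀ᵗ φ(s) ds`. -/
noncomputable def OrliczFunction.Phi (O : OrliczFunction) (t : ℝ) : ℝ :=
  ∫ s in (0:ℝ)..t, O.phi s

/-- The set `{ tφ(t)/Φ(t) : t > 0 }` used to define the Orlicz indices. -/
def OrliczFunction.indexSet (O : OrliczFunction) : Set ℝ :=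
  {r | ∃ t, 0 < t ∧ r = t * O.phi t / O.Phi t}

/-- Upper Orlicz index `p⁺_Φ`. -/
noncomputable def OrliczFunction.pPlus (O : OrliczFunction) : ℝ := sSup O.indexSet

/-- Lower Orlicz index `p⁻_Φ`. -/
noncomputable def OrliczFunction.pMinus (O : OrliczFunction) : ℝ := sInf O.indexSet

/-- Euclidean space `ℝᴺ`. -/
noncomputable abbrev E (N : ℕ) := EuclideanSpace ℝ (Fin N)

/-- Last coordinate `x_N` of `x ∈ ℝᴺ`. -/
noncomputable def lastCoord {N : ℕ} (hN : 0 < N) (x : E N) : ℝ :=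
  x ⟨N - 1, Nat.sub_lt hN Nat.one_pos⟩

/-- First `N-1` coordinates `x′` of `x ∈ ℝᴺ`. -/
noncomputable def firstCoords {N : ℕ} (x : E N) : E (N - 1) :=
  WithLp.toLp 2 (fun i => x (Fin.castLE (Nat.sub_le N 1) i))

/-- The cube `Ω_{n,T} = (-n,n)^{N-1} × (0,T)`. -/
def cube {N : ℕ} (hN : 0 < N) (n T : ℝ) : Set (E N) :=
  {x | (∀ i, firstCoords x i ∈ Set.Ioo (-n) n) ∧ lastCoord hN x ∈ Set.Ioo 0 T}

/-- The domain above the graph of `γ : ℝ^{N-1} → ℝ`. -/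
def aboveGraph {N : ℕ} (hN : 0 < N) (γ : E (N - 1) → ℝ) : Set (E N) :=
  {x | γ (firstCoords x) < lastCoord hN x}

/-- The fractional Orlicz Gagliardo modular `∫_Ω∫_Ω Φ(|D_s u(x,y)|) dμ`. -/
noncomputable def fracModular {N : ℕ} (O : OrliczFunction) (s : ℝ) (Ω : Set (E N))
    (u : E N → ℝ) : ℝ :=
  ∫ x in Ω, ∫ y in Ω, O.Phi (|u x - u y| / dist x y ^ s) / dist x y ^ N

/-- The weighted fractional Orlicz modular `∫_Ω∫_Ω Φ(|D_s u| x_N^{α₁} y_N^{α₂}) dμ`. -/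
noncomputable def fracModularW {N : ℕ} (O : OrliczFunction) (s α₁ α₂ : ℝ) (hN : 0 < N)
    (Ω : Set (E N)) (u : E N → ℝ) : ℝ :=
  ∫ x in Ω, ∫ y in Ω,
    O.Phi (|u x - u y| / dist x y ^ s * lastCoord hN x ^ α₁ * lastCoord hN y ^ α₂) /
      dist x y ^ N

/-- `u ∈ C¹_c(Ω)`. -/
def IsCc1 {N : ℕ} (Ω : Set (E N)) (u : E N → ℝ) : Prop :=
  ContDiff ℝ 1 u ∧ HasCompactSupport u ∧ tsupport u ⊆ Ω

/-- A bounded Lipschitz domain: near each boundary point, up to an isometry, the set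
coincides with the region above the graph of a Lipschitz function. -/
def IsBoundedLipschitzDomain {N : ℕ} (hN : 0 < N) (Ω : Set (E N)) : Prop :=
  IsOpen Ω ∧ Bornology.IsBounded Ω ∧ Ω.Nonempty ∧
    ∀ x ∈ frontier Ω, ∃ r > 0, ∃ T : E N ≃ᵢ E N, ∃ γ : E (N - 1) → ℝ, ∃ L : NNReal,
      LipschitzWith L γ ∧
        (T '' Ω) ∩ Metric.ball (T x) r = aboveGraph hN γ ∩ Metric.ball (T x) r

/-- distance to the boundary -/
noncomputable def distBd {N : ℕ} (Ω : Set (E N)) (x : E N) : ℝ :=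
  Metric.infDist x (frontier Ω)

-- aux: phi formula
lemma phi_eq (O : OrliczFunction) (p : ℝ)
    (hPhi : ∀ t : ℝ, 0 ≤ t → O.Phi t = t ^ p * Real.log (1 + t))
    {t : ℝ} (ht : 0 < t) :
    O.phi t = p * t ^ (p - 1) * Real.log (1 + t) + t ^ p * (1 + t)⁻¹ := by
  have h1t : (0:ℝ) < 1 + t := by linarith
  have hInt : IntervalIntegrable O.phi volume 0 t := by
    apply MonotoneOn.intervalIntegrable
    apply O.mono.mono
    rw [Set.uIcc_of_le ht.le]
    exact fun x hx => hx.1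
  have hmeas : StronglyMeasurableAtFilter O.phi (nhdsWithin t (Set.Ioi t)) volume :=
    ⟨Set.Ici t, Filter.mem_of_superset self_mem_nhdsWithin Set.Ioi_subset_Ici_self,
      (aemeasurable_restrict_of_monotoneOn measurableSet_Ici
        (O.mono.mono (Set.Ici_subset_Ici.mpr ht.le))).aestronglyMeasurable⟩
  have h1 : HasDerivWithinAt O.Phi (O.phi t) (Set.Ici t) t :=
    intervalIntegral.integral_hasDerivWithinAt_right hInt hmeas ((O.rightCont t ht.le).mono Set.Ioi_subset_Ici_self)
  have hF : HasDerivAt (fun u : ℝ => u ^ p * Real.log (1 + u))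
      (p * t ^ (p - 1) * Real.log (1 + t) + t ^ p * ((1 + t)⁻¹ * 1)) t := by
    have ha : HasDerivAt (fun u : ℝ => u ^ p) (p * t ^ (p - 1)) t :=
      Real.hasDerivAt_rpow_const (Or.inl ht.ne')
    have hb : HasDerivAt (fun u : ℝ => Real.log (1 + u)) ((1 + t)⁻¹ * 1) t :=
      (Real.hasDerivAt_log h1t.ne').comp t ((hasDerivAt_id t).const_add 1)
    exact ha.mul hb
  have h2 : HasDerivWithinAt O.Phi
      (p * t ^ (p - 1) * Real.log (1 + t) + t ^ p * ((1 + t)⁻¹ * 1)) (Set.Ici t) t :=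
    hF.hasDerivWithinAt.congr (fun u hu => hPhi u (ht.le.trans hu)) (hPhi t ht.le)
  have := (h1.derivWithin (uniqueDiffOn_Ici t t Set.self_mem_Ici)).symm.trans
    (h2.derivWithin (uniqueDiffOn_Ici t t Set.self_mem_Ici))
  rw [this]; ring

lemma ratio_eq (O : OrliczFunction) (p : ℝ) (hp : 1 ≤ p)
    (hPhi : ∀ t : ℝ, 0 ≤ t → O.Phi t = t ^ p * Real.log (1 + t))
    {t : ℝ} (ht : 0 < t) :
    t * O.phi t / O.Phi t = p + t / ((1 + t) * Real.log (1 + t)) := by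
  have h1t : (0:ℝ) < 1 + t := by linarith
  have hL : 0 < Real.log (1 + t) := Real.log_pos (by linarith)
  have htp : 0 < t ^ p := Real.rpow_pos_of_pos ht p
  have hts : t ^ (p - 1) = t ^ p / t := by
    rw [Real.rpow_sub ht, Real.rpow_one]
  rw [phi_eq O p hPhi ht, hPhi t ht.le, hts]
  field_simp

theorem stmt4 (O : OrliczFunction) (p : ℝ) (hp : 1 ≤ p)
    (hPhi : ∀ t : ℝ, 0 ≤ t → O.Phi t = t ^ p * Real.log (1 + t)) :
    O.pMinus = p ∧ O.pPlus = p + 1 := by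
  have key : ∀ t : ℝ, 0 < t →
      t * O.phi t / O.Phi t = p + t / ((1 + t) * Real.log (1 + t)) :=
    fun t ht => ratio_eq O p hp hPhi ht
  set g : ℝ → ℝ := fun t => t / ((1 + t) * Real.log (1 + t)) with hg
  have hgpos : ∀ t : ℝ, 0 < t → 0 < g t := by
    intro t ht
    have hL : 0 < Real.log (1 + t) := Real.log_pos (by linarith)
    have : (0:ℝ) < 1 + t := by linarith
    positivity
  have hglt1 : ∀ t : ℝ, 0 < t → g t < 1 := by
    intro t ht
    have h1t : (0:ℝ) < 1 + t := by linarith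
    have hL : 0 < Real.log (1 + t) := Real.log_pos (by linarith)
    rw [hg, div_lt_one (by positivity)]
    -- need t < (1+t) * log(1+t)
    have hexp : -Real.log (1 + t) + 1 < Real.exp (-Real.log (1 + t)) :=
      Real.add_one_lt_exp (by linarith)
    rw [Real.exp_neg, Real.exp_log h1t] at hexp
    have : (1 - Real.log (1 + t)) * (1 + t) < 1 := by
      rw [← lt_div_iff₀ h1t] at *
      calc (1 - Real.log (1+t)) = -Real.log (1+t) + 1 := by ring
      _ < (1+t)⁻¹ := hexp
      _ = 1 / (1+t) := by rw [one_div]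
    nlinarith
  have hnonempty : O.indexSet.Nonempty := ⟨1 * O.phi 1 / O.Phi 1, 1, one_pos, rfl⟩
  have hmem : ∀ t : ℝ, 0 < t → p + g t ∈ O.indexSet :=
    fun t ht => ⟨t, ht, (key t ht).symm⟩
  have hform : ∀ r ∈ O.indexSet, ∃ t, 0 < t ∧ r = p + g t := by
    rintro r ⟨t, ht, rfl⟩
    exact ⟨t, ht, key t ht⟩
  have hglb : IsGLB O.indexSet p := by
    constructor
    · rintro r hr
      obtain ⟨t, ht, rfl⟩ := hform r hr
      linarith [hgpos t ht]
    · intro b hb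
      by_contra hbp
      push_neg at hbp
      set ε := b - p with hε
      have hε0 : 0 < ε := by linarith
      set t := Real.exp (1 / ε) with htd
      have ht : 0 < t := Real.exp_pos _
      have hL : 1 / ε < Real.log (1 + t) := by
        calc 1 / ε = Real.log t := (Real.log_exp _).symm
        _ < Real.log (1 + t) := Real.log_lt_log ht (by linarith)
      have hL0 : 0 < Real.log (1 + t) := lt_trans (by positivity) hL
      have hgsmall : g t < ε := by
        rw [hg]
        have h1 : t / ((1 + t) * Real.log (1 + t)) < 1 / Real.log (1 + t) := by
          rw [div_lt_div_iff₀ (by positivity) hL0]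
          nlinarith
        have h2 : 1 / Real.log (1 + t) < ε := by
          rw [div_lt_iff₀ hL0]
          rw [div_lt_iff₀ hε0] at hL
          nlinarith
        linarith
      have := hb (hmem t ht)
      linarith
  have hlub : IsLUB O.indexSet (p + 1) := by
    constructor
    · rintro r hr
      obtain ⟨t, ht, rfl⟩ := hform r hr
      linarith [hglt1 t ht]
    · intro b hb
      by_contra hbp
      push_neg at hbp
      set ε := p + 1 - b with hε
      have hε0 : 0 < ε := by linarith
      set t := ε / 2 with htd
      have ht : 0 < t := by positivity
      have h1t : (0:ℝ) < 1 + t := by linarith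
      have hL : Real.log (1 + t) < t := by
        have := Real.log_lt_sub_one_of_pos h1t (by linarith)
        linarith
      have hL0 : 0 < Real.log (1 + t) := Real.log_pos (by linarith)
      have hgbig : 1 - ε < g t := by
        rw [hg]
        have h1 : (1:ℝ) / (1 + t) < t / ((1 + t) * Real.log (1 + t)) := by
          rw [div_lt_div_iff₀ h1t (by positivity)]
          nlinarith
        have h2 : 1 - ε < 1 / (1 + t) := by
          rw [lt_div_iff₀ h1t]
          nlinarith
        linarith
      have := hb (hmem t ht)
      linarith
  exact ⟨hglb.csInf_eq hnonempty, hlub.csSup_eq hnonempty⟩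
end

section
/- For Φ(t) = (1+t)ln(1+t) − t, the Orlicz indices are p⁻_Φ = 1 and p⁺_Φ = 2. -/
open MeasureTheory Real Set Filter
open scoped ENNReal

section AuxLemmas

open scoped Topology

lemma log1p_hasDerivAt' {t : ℝ} (ht : -1 < t) :
    HasDerivAt (fun x : ℝ => Real.log (1 + x)) (1 / (1 + t)) t := by
  have h1 : HasDerivAt (fun x : ℝ => 1 + x) 1 t := (hasDerivAt_id t).const_add 1
  have h := (Real.hasDerivAt_log (by linarith : (1:ℝ) + t ≠ 0)).comp t h1
  rw [one_div, ← mul_one (1 + t)⁻¹]; exact h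

lemma log1p_gt_pade' {t : ℝ} (ht : 0 < t) : 2 * t / (2 + t) < Real.log (1 + t) := by
  set F : ℝ → ℝ := fun x => Real.log (1 + x) - 2 * x / (2 + x) with hF
  have hd : ∀ x : ℝ, 0 ≤ x → HasDerivAt F (1 / (1 + x) - 4 / (2 + x) ^ 2) x := by
    intro x hx
    have h1 : HasDerivAt (fun y : ℝ => 2 * y) 2 x := by
      simpa using (hasDerivAt_id x).const_mul (2:ℝ)
    have h2 : HasDerivAt (fun y : ℝ => 2 + y) 1 x := (hasDerivAt_id x).const_add 2
    have h3 : HasDerivAt (fun y : ℝ => 2 * y / (2 + y))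
        ((2 * (2 + x) - 2 * x * 1) / (2 + x) ^ 2) x := h1.div h2 (by linarith)
    have he : (2 * (2 + x) - 2 * x * 1) / (2 + x) ^ 2 = 4 / (2 + x) ^ 2 := by
      congr 1; ring
    rw [he] at h3
    exact (log1p_hasDerivAt' (by linarith)).sub h3
  have hmono : StrictMonoOn F (Set.Ici 0) := by
    apply strictMonoOn_of_deriv_pos (convex_Ici 0)
    · exact fun x hx => ((hd x hx).continuousAt).continuousWithinAt
    · intro x hx
      rw [interior_Ici, Set.mem_Ioi] at hx
      rw [(hd x hx.le).deriv]
      rw [sub_pos, div_lt_div_iff₀ (by positivity) (by linarith)]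
      nlinarith
  have h0 := hmono (le_refl (0:ℝ)) (le_of_lt ht) ht
  simp [hF] at h0
  linarith

lemma log1p_le_cubic' {t : ℝ} (ht : 0 ≤ t) :
    Real.log (1 + t) ≤ t - t ^ 2 / 2 + t ^ 3 / 3 := by
  set F : ℝ → ℝ := fun x => x - x ^ 2 / 2 + x ^ 3 / 3 - Real.log (1 + x) with hF
  have hd : ∀ x : ℝ, 0 ≤ x → HasDerivAt F (1 - x + x ^ 2 - 1 / (1 + x)) x := by
    intro x hx
    have h1 : HasDerivAt (fun y : ℝ => y - y ^ 2 / 2 + y ^ 3 / 3) (1 - x + x ^ 2) x := by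
      have := (((hasDerivAt_id x).sub ((hasDerivAt_pow 2 x).div_const 2)).add
        ((hasDerivAt_pow 3 x).div_const 3))
      refine this.congr_deriv ?_
      norm_num
    exact h1.sub (log1p_hasDerivAt' (by linarith))
  have hmono : MonotoneOn F (Set.Ici 0) := by
    apply monotoneOn_of_deriv_nonneg (convex_Ici 0)
    · exact fun x hx => ((hd x hx).continuousAt).continuousWithinAt
    · intro x hx
      rw [interior_Ici, Set.mem_Ioi] at hx
      exact ((hd x hx.le).differentiableAt).differentiableWithinAt
    · intro x hx
      rw [interior_Ici, Set.mem_Ioi] at hx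
      rw [(hd x hx.le).deriv]
      rw [sub_nonneg, div_le_iff₀ (by linarith)]
      nlinarith
  have h0 := hmono (le_refl (0:ℝ)) ht ht
  simp [hF] at h0
  linarith

lemma OrliczFunction.phi_eq_log (O : OrliczFunction)
    (hPhi : ∀ t : ℝ, 0 ≤ t → O.Phi t = (1 + t) * Real.log (1 + t) - t)
    {t : ℝ} (ht : 0 < t) : O.phi t = Real.log (1 + t) := by
  set Ψ : ℝ → ℝ := fun x => (1 + x) * Real.log (1 + x) - x with hΨdef
  have hderiv : HasDerivAt Ψ (Real.log (1 + t)) t := by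
    have h1 : HasDerivAt (fun x : ℝ => 1 + x) 1 t := (hasDerivAt_id t).const_add 1
    have h2 := h1.mul (log1p_hasDerivAt' (by linarith : (-1:ℝ) < t))
    have h3 := h2.sub (hasDerivAt_id t)
    have he : 1 * Real.log (1 + t) + (1 + t) * (1 / (1 + t)) - 1 = Real.log (1 + t) := by
      field_simp
      ring
    rw [he] at h3
    exact h3
  have key : ∀ a b : ℝ, 0 ≤ a → a ≤ b →
      (b - a) * O.phi a ≤ Ψ b - Ψ a ∧ Ψ b - Ψ a ≤ (b - a) * O.phi b := by
    intro a b ha hab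
    have hb : 0 ≤ b := le_trans ha hab
    have hsub : Set.uIcc a b ⊆ Set.Ici 0 := by
      rw [Set.uIcc_of_le hab]
      exact fun x hx => le_trans ha hx.1
    have hint : IntervalIntegrable O.phi volume a b :=
      (O.mono.mono hsub).intervalIntegrable
    have hint0a : IntervalIntegrable O.phi volume 0 a :=
      (O.mono.mono (by rw [Set.uIcc_of_le ha]; exact fun x hx => hx.1)).intervalIntegrable
    have heq : Ψ b - Ψ a = ∫ s in a..b, O.phi s := by
      have h := intervalIntegral.integral_add_adjacent_intervals hint0a hint
      have hA := hPhi a ha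
      have hB := hPhi b hb
      unfold OrliczFunction.Phi at hA hB
      simp only [hΨdef]
      linarith [h]
    constructor
    · rw [heq]
      have := intervalIntegral.integral_mono_on hab (intervalIntegrable_const) hint
        (fun x hx => O.mono (Set.mem_Ici.mpr ha) (Set.mem_Ici.mpr (le_trans ha hx.1)) hx.1)
      simpa [mul_comm] using this
    · rw [heq]
      have := intervalIntegral.integral_mono_on hab hint (intervalIntegrable_const)
        (fun x hx => O.mono (Set.mem_Ici.mpr (le_trans ha hx.1)) (Set.mem_Ici.mpr hb) hx.2)
      simpa [mul_comm] using this
  have hslope := hasDerivAt_iff_tendsto_slope.mp hderiv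
  have h1 : O.phi t ≤ Real.log (1 + t) := by
    have hle : 𝓝[>] t ≤ 𝓝[≠] t :=
      nhdsWithin_mono t (fun y hy => (ne_of_gt hy : y ≠ t))
    refine ge_of_tendsto (hslope.mono_left hle) ?_
    filter_upwards [self_mem_nhdsWithin] with y hy
    have hk := (key t y ht.le (le_of_lt hy)).1
    rw [slope_def_field]
    rw [le_div_iff₀ (by simp at hy; linarith : (0:ℝ) < y - t)]
    linarith
  have h2 : Real.log (1 + t) ≤ O.phi t := by
    have hle : 𝓝[<] t ≤ 𝓝[≠] t :=
      nhdsWithin_mono t (fun y hy => (ne_of_lt hy : y ≠ t))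
    refine le_of_tendsto (hslope.mono_left hle) ?_
    filter_upwards [Ioo_mem_nhdsLT_of_mem (show t ∈ Set.Ioc 0 t from ⟨ht, le_refl t⟩)]
      with y hy
    have hk := (key y t hy.1.le hy.2.le).2
    rw [slope_def_field]
    rw [div_le_iff_of_neg (by linarith [hy.2] : y - t < 0)]
    linarith
  linarith

end AuxLemmas

theorem stmt5 (O : OrliczFunction)
    (hPhi : ∀ t : ℝ, 0 ≤ t → O.Phi t = (1 + t) * Real.log (1 + t) - t) :
    O.pMinus = 1 ∧ O.pPlus = 2 := by
  set f : ℝ → ℝ := fun t => t * Real.log (1 + t) / ((1 + t) * Real.log (1 + t) - t)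
    with hfdef
  have hval : ∀ t : ℝ, 0 < t → t * O.phi t / O.Phi t = f t := by
    intro t ht
    rw [O.phi_eq_log hPhi ht, hPhi t ht.le, hfdef]
  have hP : ∀ t : ℝ, 0 < t → 0 < (1 + t) * Real.log (1 + t) - t := by
    intro t ht
    have hL1 := log1p_gt_pade' ht
    rw [div_lt_iff₀ (by linarith)] at hL1
    nlinarith
  have hf1 : ∀ t : ℝ, 0 < t → 1 < f t := by
    intro t ht
    have hL3 : Real.log (1 + t) < t := by
      have := Real.log_lt_sub_one_of_pos (by linarith : (0:ℝ) < 1 + t) (by linarith)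
      linarith
    rw [hfdef]
    simp only
    rw [lt_div_iff₀ (hP t ht)]
    nlinarith
  have hf2 : ∀ t : ℝ, 0 < t → f t < 2 := by
    intro t ht
    have hL1 := log1p_gt_pade' ht
    rw [div_lt_iff₀ (by linarith)] at hL1
    rw [hfdef]
    simp only
    rw [div_lt_iff₀ (hP t ht)]
    nlinarith
  have hmemf : ∀ t : ℝ, 0 < t → f t ∈ O.indexSet := by
    intro t ht
    exact ⟨t, ht, (hval t ht).symm⟩
  have hne : O.indexSet.Nonempty := ⟨f 1, hmemf 1 one_pos⟩
  have hbddA : BddAbove O.indexSet := by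
    refine ⟨2, fun r hr => ?_⟩
    obtain ⟨t, ht, rfl⟩ := hr
    rw [hval t ht]
    exact (hf2 t ht).le
  have hbddB : BddBelow O.indexSet := by
    refine ⟨1, fun r hr => ?_⟩
    obtain ⟨t, ht, rfl⟩ := hr
    rw [hval t ht]
    exact (hf1 t ht).le
  constructor
  · -- pMinus = 1
    apply le_antisymm
    · apply le_of_forall_pos_le_add
      intro ε hε
      have hexp : (1:ℝ) < Real.exp (1 / ε + 1) := by
        rw [Real.one_lt_exp_iff]; positivity
      set t := Real.exp (1 / ε + 1) - 1 with htdef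
      have ht : 0 < t := by rw [htdef]; linarith
      have hL : Real.log (1 + t) = 1 / ε + 1 := by
        rw [htdef, show (1 : ℝ) + (Real.exp (1 / ε + 1) - 1) = Real.exp (1 / ε + 1) by ring]
        exact Real.log_exp _
      have hft : f t ≤ 1 + ε := by
        rw [hfdef]
        simp only
        rw [div_le_iff₀ (hP t ht), hL]
        have h1 : (0:ℝ) < 1 / ε := by positivity
        have hu : ε * (1 / ε) = 1 := by field_simp
        nlinarith [hu, mul_pos ht hε, mul_pos ht h1, mul_pos hε h1]
      calc O.pMinus ≤ f t := csInf_le hbddB (hmemf t ht)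
        _ ≤ 1 + ε := hft
    · exact le_csInf hne (fun r hr => by
        obtain ⟨t, ht, rfl⟩ := hr
        rw [hval t ht]
        exact (hf1 t ht).le)
  · -- pPlus = 2
    apply le_antisymm
    · exact csSup_le hne (fun r hr => by
        obtain ⟨t, ht, rfl⟩ := hr
        rw [hval t ht]
        exact (hf2 t ht).le)
    · apply le_of_forall_pos_le_add
      intro ε hε
      set t := min ε (1/2) with htdef
      have ht : 0 < t := lt_min hε (by norm_num)
      have ht2 : t ≤ 1/2 := min_le_right _ _
      have htε : t ≤ ε := min_le_left _ _
      have hft : 2 - t ≤ f t := by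
        rw [hfdef]
        simp only
        rw [le_div_iff₀ (hP t ht)]
        have hL2 := log1p_le_cubic' ht.le
        have h2t : (0:ℝ) ≤ 2 - t ^ 2 := by nlinarith
        have hkey : (2 - t ^ 2) * Real.log (1 + t) ≤ 2 * t - t ^ 2 := by
          calc (2 - t ^ 2) * Real.log (1 + t) ≤ (2 - t ^ 2) * (t - t ^ 2 / 2 + t ^ 3 / 3) :=
                mul_le_mul_of_nonneg_left hL2 h2t
            _ ≤ 2 * t - t ^ 2 := by
                nlinarith [mul_nonneg (mul_nonneg (mul_nonneg ht.le ht.le) ht.le)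
                  (sq_nonneg (2 * t - 3/2)), mul_nonneg (mul_nonneg ht.le ht.le) ht.le]
        nlinarith [hkey]
      calc (2:ℝ) ≤ f t + t := by linarith
        _ ≤ O.pPlus + ε := add_le_add (le_csSup hbddA (hmemf t ht)) htε
end

section
/- Let Φ be an Orlicz function and Λ > 1. There exists a constant C = C(Φ,Λ) > 0 such that Φ(a+b) ≤ λΦ(a) + C(λ−1)^{1−p⁺_Φ} Φ(b) for all a, b ∈ [0,∞) and all λ ∈ (1,Λ]. -/
open MeasureTheory Real Set Filter
open scoped ENNReal

namespace OrliczFunction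

variable (O : OrliczFunction)

lemma phi_nonneg {t : ℝ} (ht : 0 ≤ t) : 0 ≤ O.phi t := by
  have := O.mono (self_mem_Ici) (show t ∈ Set.Ici 0 from ht) ht
  rwa [O.map_zero] at this

lemma intInt {a b : ℝ} (ha : 0 ≤ a) (hb : 0 ≤ b) :
    IntervalIntegrable O.phi volume a b := by
  refine (O.mono.mono ?_).intervalIntegrable
  intro x hx
  exact le_trans (le_inf ha hb) hx.1

lemma Phi_zero : O.Phi 0 = 0 := intervalIntegral.integral_same

lemma Phi_add {a b : ℝ} (ha : 0 ≤ a) (hab : a ≤ b) :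
    O.Phi b = O.Phi a + ∫ s in a..b, O.phi s :=
  (intervalIntegral.integral_add_adjacent_intervals (O.intInt le_rfl ha)
    (O.intInt ha (ha.trans hab))).symm

lemma Phi_nonneg {t : ℝ} (ht : 0 ≤ t) : 0 ≤ O.Phi t :=
  intervalIntegral.integral_nonneg ht (fun x hx => O.phi_nonneg hx.1)

lemma Phi_mono {a b : ℝ} (ha : 0 ≤ a) (hab : a ≤ b) : O.Phi a ≤ O.Phi b := by
  rw [O.Phi_add ha hab]
  have : 0 ≤ ∫ s in a..b, O.phi s :=
    intervalIntegral.integral_nonneg hab (fun x hx => O.phi_nonneg (ha.trans hx.1))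
  linarith

lemma const_int_le {a b : ℝ} (ha : 0 ≤ a) (hab : a ≤ b) :
    (b - a) * O.phi a ≤ ∫ s in a..b, O.phi s := by
  have h := intervalIntegral.integral_mono_on hab (intervalIntegrable_const (c := O.phi a))
    (O.intInt ha (ha.trans hab))
    (fun x hx => O.mono (show a ∈ Set.Ici 0 from ha) (ha.trans hx.1) hx.1)
  simpa [smul_eq_mul] using h

lemma int_le_const {a b : ℝ} (ha : 0 ≤ a) (hab : a ≤ b) :
    (∫ s in a..b, O.phi s) ≤ (b - a) * O.phi b := by
  have h := intervalIntegral.integral_mono_on hab (O.intInt ha (ha.trans hab))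
    (intervalIntegrable_const (c := O.phi b))
    (fun x hx => O.mono (ha.trans hx.1) (show b ∈ Set.Ici 0 from ha.trans hab) hx.2)
  simpa [smul_eq_mul] using h

lemma Phi_pos {t : ℝ} (ht : 0 < t) : 0 < O.Phi t := by
  have h2 : (0:ℝ) ≤ t / 2 := by linarith
  have h3 : t / 2 ≤ t := by linarith
  have h4 := O.const_int_le h2 h3
  have h5 : 0 < O.phi (t / 2) := O.pos _ (by linarith)
  have := O.Phi_add h2 h3
  have h6 : 0 ≤ O.Phi (t / 2) := O.Phi_nonneg h2
  nlinarith

lemma bddAbove_indexSet : BddAbove O.indexSet := by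
  obtain ⟨D, hD0, hD⟩ := O.delta2
  refine ⟨D, ?_⟩
  rintro r ⟨t, ht, rfl⟩
  rw [div_le_iff₀ (O.Phi_pos ht)]
  have h1 : t * O.phi t ≤ ∫ s in t..(2 * t), O.phi s := by
    have := O.const_int_le ht.le (by linarith : t ≤ 2 * t)
    have h2t : 2 * t - t = t := by ring
    rwa [h2t] at this
  have h2 : O.Phi (2 * t) = O.Phi t + ∫ s in t..(2 * t), O.phi s :=
    O.Phi_add ht.le (by linarith)
  have h3 : O.Phi (2 * t) ≤ D * O.Phi t := hD t ht.le
  have h4 : 0 ≤ O.Phi t := O.Phi_nonneg ht.le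
  nlinarith

lemma one_le_pPlus : 1 ≤ O.pPlus := by
  have hmem : (1 : ℝ) * O.phi 1 / O.Phi 1 ∈ O.indexSet := ⟨1, one_pos, rfl⟩
  have h := le_csSup O.bddAbove_indexSet hmem
  have h1 : O.Phi 1 ≤ 1 * O.phi 1 := by
    have := O.int_le_const (a := 0) (b := 1) le_rfl zero_le_one
    simpa [Phi] using this
  have h2 : (1:ℝ) ≤ 1 * O.phi 1 / O.Phi 1 :=
    (one_le_div (O.Phi_pos one_pos)).2 h1
  exact h2.trans h

lemma key_ineq {t : ℝ} (ht : 0 < t) : t * O.phi t ≤ O.pPlus * O.Phi t := by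
  have h := le_csSup O.bddAbove_indexSet (⟨t, ht, rfl⟩ : _ ∈ O.indexSet)
  rw [div_le_iff₀ (O.Phi_pos ht)] at h
  exact h

lemma hasDerivPhi {t : ℝ} (ht : 0 ≤ t) :
    HasDerivWithinAt O.Phi (O.phi t) (Set.Ici t) t := by
  refine intervalIntegral.integral_hasDerivWithinAt_right (O.intInt le_rfl ht)
    ⟨Set.Ioc t (t + 1), Ioc_mem_nhdsGT_of_mem ⟨le_rfl, lt_add_one t⟩, ?_⟩
    ((O.rightCont t ht).mono Set.Ioi_subset_Ici_self)
  exact ((O.intInt ht (by linarith)).1).aestronglyMeasurable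

end OrliczFunction

namespace OrliczFunction
variable (O : OrliczFunction)

lemma Phi_contOn {T : ℝ} (hT : 0 ≤ T) : ContinuousOn O.Phi (Set.Icc 0 T) := by
  have h : IntegrableOn O.phi (Set.uIcc 0 T) volume := by
    rw [Set.uIcc_of_le hT]
    exact Iff.mpr integrableOn_Icc_iff_integrableOn_Ioc (O.intInt le_rfl hT).1
  have := intervalIntegral.continuousOn_primitive_interval (a := 0) (b := T) (f := O.phi) h
  rwa [Set.uIcc_of_le hT] at this

lemma Phi_scale {t M : ℝ} (ht : 0 ≤ t) (hM : 1 ≤ M) :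
    O.Phi (M * t) ≤ M ^ O.pPlus * O.Phi t := by
  rcases ht.eq_or_lt with h | ht
  · rw [← h, mul_zero, O.Phi_zero]; simp
  have hM0 : (0:ℝ) < M := lt_of_lt_of_le one_pos hM
  set p := O.pPlus with hp
  set X := Real.log M with hXdef
  have hX0 : 0 ≤ X := Real.log_nonneg hM
  have hexpX : Real.exp X = M := Real.exp_log hM0
  set g : ℝ → ℝ := fun x => t * Real.exp x with hg
  have hgpos : ∀ x, 0 < g x := fun x => mul_pos ht (Real.exp_pos x)
  have hgmaps : ∀ x ∈ Set.Icc 0 X, g x ∈ Set.Icc 0 (M * t) := by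
    intro x hx
    constructor
    · exact (hgpos x).le
    · have : Real.exp x ≤ M := by
        rw [← hexpX]; exact Real.exp_le_exp.mpr hx.2
      calc t * Real.exp x ≤ t * M := by nlinarith
        _ = M * t := mul_comm t M
  have hfc : ContinuousOn (fun x => O.Phi (g x)) (Set.Icc 0 X) := by
    refine (O.Phi_contOn (by positivity : (0:ℝ) ≤ M * t)).comp
      (Continuous.continuousOn (by continuity)) hgmaps
  have hf' : ∀ x ∈ Set.Ico 0 X,
      HasDerivWithinAt (fun x => O.Phi (g x)) (O.phi (g x) * (t * Real.exp x)) (Set.Ici x) x := by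
    intro x hx
    have hgd : HasDerivAt g (t * Real.exp x) x := (Real.hasDerivAt_exp x).const_mul t
    have hmaps : Set.MapsTo g (Set.Ici x) (Set.Ici (g x)) := by
      intro y hy
      exact mul_le_mul_of_nonneg_left (Real.exp_le_exp.mpr hy) ht.le
    exact (O.hasDerivPhi (hgpos x).le).comp x hgd.hasDerivWithinAt hmaps
  have key := norm_le_gronwallBound_of_norm_deriv_right_le (δ := O.Phi t) (K := p) (ε := 0)
    hfc hf' ?_ ?_ X ⟨hX0, le_rfl⟩
  · have hgX : g X = M * t := by rw [hg]; simp only []; rw [hexpX, mul_comm]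
    rw [hgX] at key
    rw [Real.norm_eq_abs, abs_of_nonneg (O.Phi_nonneg (by positivity))] at key
    rw [gronwallBound_ε0, sub_zero] at key
    have : Real.exp (p * X) = M ^ p := by
      rw [Real.rpow_def_of_pos hM0, mul_comm]
    rw [this] at key
    linarith [key]
  · show ‖O.Phi (g 0)‖ ≤ O.Phi t
    have hg0 : g 0 = t := by simp [hg]
    rw [hg0, Real.norm_eq_abs, abs_of_nonneg (O.Phi_nonneg ht.le)]
  · intro x hx
    rw [Real.norm_eq_abs, Real.norm_eq_abs, add_zero,
      abs_of_nonneg (O.Phi_nonneg (hgpos x).le),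
      abs_of_nonneg (mul_nonneg (O.phi_nonneg (hgpos x).le) (by positivity))]
    have := O.key_ineq (hgpos x)
    calc O.phi (g x) * (t * Real.exp x) = g x * O.phi (g x) := by rw [hg]; ring
      _ ≤ p * O.Phi (g x) := this

end OrliczFunction


set_option maxHeartbeats 1000000 in
theorem stmt6 (O : OrliczFunction) (Λ : ℝ) (hΛ : 1 < Λ) :
    ∃ C > 0, ∀ a b : ℝ, 0 ≤ a → 0 ≤ b → ∀ lam : ℝ, 1 < lam → lam ≤ Λ →
      O.Phi (a + b) ≤ lam * O.Phi a + C * (lam - 1) ^ (1 - O.pPlus) * O.Phi b := by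
  have hp1 : 1 ≤ O.pPlus := O.one_le_pPlus
  set p := O.pPlus with hpdef
  have hp0 : 0 < p := lt_of_lt_of_le one_pos hp1
  have hΛ0 : 0 < Λ := lt_trans one_pos hΛ
  obtain ⟨c, hcdef⟩ : ∃ c : ℝ, c = 1 / (3 * p * Λ) := ⟨_, rfl⟩
  have hc0 : 0 < c := by rw [hcdef]; positivity
  have hCpos : 0 < p * (2 / c) ^ (p - 1) := by positivity
  refine ⟨p * (2 / c) ^ (p - 1), hCpos, ?_⟩
  intro a b ha hb lam hlam1 hlamΛ
  have hw0 : 0 < lam - 1 := by linarith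
  have hrpos : 0 < (lam - 1) ^ (1 - p) := Real.rpow_pos_of_pos hw0 _
  have hPhia : 0 ≤ O.Phi a := O.Phi_nonneg ha
  have hPhib : 0 ≤ O.Phi b := O.Phi_nonneg hb
  obtain ⟨z, hzdef⟩ : ∃ z : ℝ, z = c * (lam - 1) := ⟨_, rfl⟩
  have hz0 : 0 < z := by rw [hzdef]; positivity
  have hpz : p * z = (lam - 1) / (3 * Λ) := by
    rw [hzdef, hcdef]; field_simp
  have hpzlt : p * z < 1 / 3 := by
    rw [hpz]; rw [div_lt_div_iff₀ (by positivity) (by norm_num)]; nlinarith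
  have hzle : z ≤ 1 / 3 := by nlinarith
  by_cases hcase : b ≤ z * a
  · -- small b case
    have hab : a + b ≤ (1 + z) * a := by nlinarith
    have hbase : (1 + z) ^ p ≤ lam := by
      have h1 : (1 + z) ^ p ≤ Real.exp z ^ p :=
        Real.rpow_le_rpow (by linarith) (by linarith [Real.add_one_le_exp z]) hp0.le
      have h2 : Real.exp z ^ p = Real.exp (p * z) := by
        rw [← Real.exp_mul, mul_comm]
      have hlt : (0:ℝ) < 1 - p * z := by linarith
      have h3 : Real.exp (p * z) ≤ 1 / (1 - p * z) := by
        have h4 : 1 - p * z ≤ Real.exp (-(p * z)) := by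
          have := Real.add_one_le_exp (-(p * z)); linarith
        rw [Real.exp_neg] at h4
        have hep : 0 < Real.exp (p * z) := Real.exp_pos _
        rw [le_div_iff₀ hlt]
        calc Real.exp (p * z) * (1 - p * z)
            ≤ Real.exp (p * z) * (Real.exp (p * z))⁻¹ :=
              mul_le_mul_of_nonneg_left h4 hep.le
          _ = 1 := mul_inv_cancel₀ hep.ne'
      have h5 : 1 / (1 - p * z) ≤ lam := by
        rw [div_le_iff₀ hlt, hpz]
        have hkey : lam * ((lam - 1) / (3 * Λ)) ≤ lam - 1 := by
          rw [mul_div_assoc', div_le_iff₀ (by positivity : (0:ℝ) < 3 * Λ)]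
          nlinarith [mul_nonneg hw0.le (by linarith : (0:ℝ) ≤ 3 * Λ - lam)]
        nlinarith
      calc (1 + z) ^ p ≤ Real.exp (p * z) := by rw [← h2]; exact h1
        _ ≤ 1 / (1 - p * z) := h3
        _ ≤ lam := h5
    have hstep : O.Phi (a + b) ≤ lam * O.Phi a := by
      calc O.Phi (a + b) ≤ O.Phi ((1 + z) * a) := O.Phi_mono (by linarith) hab
        _ ≤ (1 + z) ^ p * O.Phi a := O.Phi_scale ha (by linarith)
        _ ≤ lam * O.Phi a := mul_le_mul_of_nonneg_right hbase hPhia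
    have : 0 ≤ p * (2 / c) ^ (p - 1) * (lam - 1) ^ (1 - p) * O.Phi b := by positivity
    linarith
  · -- large b case
    push_neg at hcase
    have hbpos : 0 < b := lt_of_le_of_lt (by positivity) hcase
    obtain ⟨M, hMdef⟩ : ∃ M : ℝ, M = 1 + 1 / z := ⟨_, rfl⟩
    have hM1 : 1 ≤ M := by
      have : 0 < 1 / z := by positivity
      linarith
    have hM0 : 0 < M := lt_of_lt_of_le one_pos hM1
    have habM : a + b ≤ M * b := by
      have haz : a * z < b := by nlinarith
      have : a ≤ b / z := by
        rw [le_div_iff₀ hz0]; nlinarith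
      have hMb : M * b = b + b / z := by
        rw [hMdef]; field_simp
      linarith
    have step1 : O.Phi (a + b) ≤ O.Phi a + b * O.phi (a + b) := by
      have := O.Phi_add ha (by linarith : a ≤ a + b)
      have h2 := O.int_le_const ha (by linarith : a ≤ a + b)
      have h3 : a + b - a = b := by ring
      rw [h3] at h2
      linarith
    have step2 : O.phi (a + b) ≤ O.phi (M * b) :=
      O.mono (show a + b ∈ Set.Ici 0 by simp; linarith)
        (show M * b ∈ Set.Ici 0 by simp; positivity) habM
    have step3 : M * b * O.phi (M * b) ≤ p * O.Phi (M * b) := O.key_ineq (by positivity)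

    have step4 : O.Phi (M * b) ≤ M ^ p * O.Phi b := O.Phi_scale hb hM1
    have hMp : M ^ p = M ^ (p - 1) * M := by
      rw [← Real.rpow_add_one hM0.ne' (p - 1), sub_add_cancel]
    have step5 : b * O.phi (M * b) ≤ p * M ^ (p - 1) * O.Phi b := by
      have h5 : M * (b * O.phi (M * b)) ≤ p * (M ^ (p - 1) * M * O.Phi b) := by
        calc M * (b * O.phi (M * b)) = M * b * O.phi (M * b) := by ring
          _ ≤ p * O.Phi (M * b) := step3
          _ ≤ p * (M ^ p * O.Phi b) := by nlinarith
          _ = p * (M ^ (p - 1) * M * O.Phi b) := by rw [hMp]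
      nlinarith [Real.rpow_pos_of_pos hM0 (p - 1)]
    have step6 : M ^ (p - 1) ≤ (2 / z) ^ (p - 1) := by
      apply Real.rpow_le_rpow hM0.le _ (by linarith)
      rw [hMdef, le_div_iff₀ hz0]
      have hzz : (1 + 1 / z) * z = z + 1 := by field_simp
      rw [hzz]; linarith
    have step7 : (2 / z) ^ (p - 1) = (2 / c) ^ (p - 1) * (lam - 1) ^ (1 - p) := by
      have h1 : 2 / z = (2 / c) * (lam - 1)⁻¹ := by
        rw [hzdef]; field_simp
      rw [h1, Real.mul_rpow (by positivity) (by positivity),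
        Real.inv_rpow hw0.le, ← Real.rpow_neg hw0.le,
        show -(p - 1) = 1 - p by ring]
    have final : b * O.phi (a + b) ≤ p * (2 / c) ^ (p - 1) * (lam - 1) ^ (1 - p) * O.Phi b := by
      have h6 : b * O.phi (a + b) ≤ b * O.phi (M * b) :=
        mul_le_mul_of_nonneg_left step2 hb
      have h7 : p * M ^ (p - 1) * O.Phi b ≤ p * ((2 / c) ^ (p - 1) * (lam - 1) ^ (1 - p)) * O.Phi b := by
        rw [← step7]
        have := mul_le_mul_of_nonneg_right (mul_le_mul_of_nonneg_left step6 hp0.le) hPhib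
        linarith
      calc b * O.phi (a + b) ≤ b * O.phi (M * b) := h6
        _ ≤ p * M ^ (p - 1) * O.Phi b := step5
        _ ≤ p * ((2 / c) ^ (p - 1) * (lam - 1) ^ (1 - p)) * O.Phi b := h7
        _ = p * (2 / c) ^ (p - 1) * (lam - 1) ^ (1 - p) * O.Phi b := by ring
    have hlamPhia : O.Phi a ≤ lam * O.Phi a := by nlinarith
    linarith
end

section
/- Let P and Q be disjoint measurable subsets of ℝᴺ of finite positive measure and Φ an Orlicz function. Then for every u ∈ C¹_c(ℝᴺ), Φ(|(u)_P − (u)_Q|) ≤ (2^{p⁺_Φ}/min{|P|,|Q|}) ∫_{P∪Q} Φ(|u(x) − (u)_{P∪Q}|) dx, where (u)_A denotes the average of u over A. -/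
open MeasureTheory Real Set Filter
open scoped ENNReal

section Aux
variable (O : OrliczFunction)

lemma phi_nonneg {t : ℝ} (ht : 0 ≤ t) : 0 ≤ O.phi t := by
  rcases eq_or_lt_of_le ht with h | h
  · simp [← h, O.map_zero]
  · exact (O.pos t h).le

lemma phi_intble {a b : ℝ} (ha : 0 ≤ a) (hb : 0 ≤ b) :
    IntervalIntegrable O.phi volume a b :=
  (O.mono.mono (fun x hx => le_trans (le_min ha hb) hx.1)).intervalIntegrable

lemma Phi_sub {a b : ℝ} (ha : 0 ≤ a) (hb : 0 ≤ b) :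
    O.Phi b - O.Phi a = ∫ s in a..b, O.phi s := by
  have h := intervalIntegral.integral_add_adjacent_intervals
    (phi_intble O le_rfl ha) (phi_intble O ha hb)
  unfold OrliczFunction.Phi
  linarith [h]

lemma Phi_nonneg {t : ℝ} (ht : 0 ≤ t) : 0 ≤ O.Phi t :=
  intervalIntegral.integral_nonneg ht (fun s hs => phi_nonneg O hs.1)

lemma Phi_mono {a b : ℝ} (ha : 0 ≤ a) (hab : a ≤ b) : O.Phi a ≤ O.Phi b := by
  have hb : 0 ≤ b := le_trans ha hab
  have h : 0 ≤ O.Phi b - O.Phi a := by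
    rw [Phi_sub O ha hb]
    exact intervalIntegral.integral_nonneg hab (fun s hs => phi_nonneg O (le_trans ha hs.1))
  linarith

lemma Phi_le_mul {t : ℝ} (ht : 0 ≤ t) : O.Phi t ≤ t * O.phi t := by
  have h : O.Phi t ≤ ∫ _ in (0:ℝ)..t, O.phi t := by
    apply intervalIntegral.integral_mono_on ht (phi_intble O le_rfl ht)
      intervalIntegrable_const
    intro s hs
    exact O.mono hs.1 ht hs.2
  simpa [smul_eq_mul] using h

lemma mul_le_Phi_sub {t : ℝ} (ht : 0 ≤ t) : t * O.phi t ≤ O.Phi (2 * t) - O.Phi t := by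
  have h2t : 0 ≤ 2 * t := by linarith
  rw [Phi_sub O ht h2t]
  have h : (∫ _ in t..(2*t), O.phi t) ≤ ∫ s in t..(2*t), O.phi s := by
    apply intervalIntegral.integral_mono_on (by linarith) intervalIntegrable_const
      (phi_intble O ht h2t)
    intro s hs
    exact O.mono ht (le_trans ht hs.1) hs.1
  calc t * O.phi t = (2 * t - t) • O.phi t := by rw [smul_eq_mul]; ring
    _ ≤ _ := by rw [← intervalIntegral.integral_const]; exact h

lemma Phi_pos {t : ℝ} (ht : 0 < t) : 0 < O.Phi t := by
  have h1 : O.Phi t - O.Phi (t/2) = ∫ s in (t/2)..t, O.phi s := Phi_sub O (by linarith) ht.le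
  have h2 : (∫ _ in (t/2)..t, O.phi (t/2)) ≤ ∫ s in (t/2)..t, O.phi s := by
    apply intervalIntegral.integral_mono_on (by linarith) intervalIntegrable_const
      (phi_intble O (by linarith) ht.le)
    intro s hs
    exact O.mono (by linarith : (0:ℝ) ≤ t/2) (le_trans (by linarith) hs.1) hs.1
  have h3 : (0:ℝ) < (t - t/2) * O.phi (t/2) :=
    mul_pos (by linarith) (O.pos _ (by linarith))
  have h4 := Phi_nonneg O (show (0:ℝ) ≤ t/2 by linarith)
  have h5 : (∫ _ in (t/2)..t, O.phi (t/2)) = (t - t/2) * O.phi (t/2) := by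
    simp [smul_eq_mul]
  nlinarith

lemma indexSet_bddAbove : BddAbove O.indexSet := by
  obtain ⟨C, hC, hD⟩ := O.delta2
  refine ⟨C, ?_⟩
  rintro r ⟨t, ht, rfl⟩
  rw [div_le_iff₀ (Phi_pos O ht)]
  have h1 := mul_le_Phi_sub O ht.le
  have h2 := hD t ht.le
  have h3 := Phi_nonneg O ht.le
  have : O.Phi (2 * t) ≤ C * O.Phi t := h2
  nlinarith

lemma le_pPlus {t : ℝ} (ht : 0 < t) : t * O.phi t / O.Phi t ≤ O.pPlus :=
  le_csSup (indexSet_bddAbove O) ⟨t, ht, rfl⟩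

lemma one_le_pPlus : 1 ≤ O.pPlus := by
  refine le_trans ?_ (le_pPlus O one_pos)
  rw [le_div_iff₀ (Phi_pos O one_pos), one_mul]
  simpa using Phi_le_mul O (zero_le_one)

lemma phi_le_pPlus_mul {t : ℝ} (ht : 0 < t) : t * O.phi t ≤ O.pPlus * O.Phi t := by
  have h := le_pPlus O ht
  rwa [div_le_iff₀ (Phi_pos O ht)] at h


lemma Phi_contOn_Icc {c : ℝ} (hc : 0 ≤ c) : ContinuousOn O.Phi (Icc 0 c) := by
  have h : IntegrableOn O.phi (uIcc 0 c) volume := by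
    rw [uIcc_of_le hc]
    exact (intervalIntegrable_iff_integrableOn_Icc_of_le hc).mp (phi_intble O le_rfl hc)
  have := intervalIntegral.continuousOn_primitive_interval h
  rwa [uIcc_of_le hc] at this

lemma Phi_contOn : ContinuousOn O.Phi (Ici 0) := by
  intro x hx
  have hx' : (0:ℝ) ≤ x := hx
  have h1 := Phi_contOn_Icc O (show (0:ℝ) ≤ x + 1 by linarith)
  have h2 : ContinuousWithinAt O.Phi (Icc 0 (x+1)) x := h1 x ⟨hx', by linarith⟩
  apply h2.mono_of_mem_nhdsWithin
  rw [← Ici_inter_Iic]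
  exact inter_mem self_mem_nhdsWithin (nhdsWithin_le_nhds (Iic_mem_nhds (lt_add_one x)))

lemma Phi_contAt {t : ℝ} (ht : 0 < t) : ContinuousAt O.Phi t := by
  have h1 := Phi_contOn_Icc O (show (0:ℝ) ≤ t + 1 by linarith)
  exact h1.continuousAt (Icc_mem_nhds ht (lt_add_one t))

lemma Phi_convexOn : ConvexOn ℝ (Ici 0) O.Phi := by
  apply convexOn_of_slope_mono_adjacent (convex_Ici 0)
  intro x y z hx hz hxy hyz
  have hx' : (0:ℝ) ≤ x := hx
  have hy : (0:ℝ) ≤ y := le_trans hx' hxy.le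
  have hz' : (0:ℝ) ≤ z := hz
  have h1 : O.Phi y - O.Phi x ≤ (y - x) * O.phi y := by
    rw [Phi_sub O hx' hy]
    have h : (∫ s in x..y, O.phi s) ≤ ∫ _ in x..y, O.phi y := by
      apply intervalIntegral.integral_mono_on hxy.le (phi_intble O hx' hy)
        intervalIntegrable_const
      intro s hs
      exact O.mono (le_trans hx' hs.1) hy hs.2
    simpa [smul_eq_mul] using h
  have h2 : (z - y) * O.phi y ≤ O.Phi z - O.Phi y := by
    rw [Phi_sub O hy hz']
    have h : (∫ _ in y..z, O.phi y) ≤ ∫ s in y..z, O.phi s := by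
      apply intervalIntegral.integral_mono_on hyz.le intervalIntegrable_const
        (phi_intble O hy hz')
      intro s hs
      exact O.mono hy (le_trans hy hs.1) hs.1
    simpa [smul_eq_mul] using h
  rw [div_le_div_iff₀ (by linarith) (by linarith)]
  nlinarith

lemma PhiAbs_convexOn (c : ℝ) : ConvexOn ℝ univ (fun r => O.Phi |r - c|) := by
  refine ⟨convex_univ, ?_⟩
  intro x _ y _ a b ha hb hab
  simp only [smul_eq_mul]
  have h1 : |a * x + b * y - c| ≤ a * |x - c| + b * |y - c| := by
    have he : a * x + b * y - c = a * (x - c) + b * (y - c) := by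
      have hc' : a * c + b * c = c := by
        rw [← add_mul, hab, one_mul]
      linarith [hc']
    rw [he]
    calc |a * (x - c) + b * (y - c)| ≤ |a * (x - c)| + |b * (y - c)| := abs_add_le _ _
      _ = a * |x - c| + b * |y - c| := by
        rw [abs_mul, abs_mul, abs_of_nonneg ha, abs_of_nonneg hb]
  calc O.Phi |a * x + b * y - c| ≤ O.Phi (a * |x - c| + b * |y - c|) :=
        Phi_mono O (abs_nonneg _) h1
    _ ≤ a * O.Phi |x - c| + b * O.Phi |y - c| := by
        have := (Phi_convexOn O).2 (mem_Ici.2 (abs_nonneg (x - c)))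
          (mem_Ici.2 (abs_nonneg (y - c))) ha hb hab
        simpa [smul_eq_mul] using this

lemma PhiAbs_continuous (c : ℝ) : Continuous (fun r => O.Phi |r - c|) := by
  apply (Phi_contOn O).comp_continuous
  · exact (continuous_id.sub continuous_const).abs
  · exact fun r => mem_Ici.2 (abs_nonneg _)


lemma Phi_double {t : ℝ} (ht : 0 ≤ t) : O.Phi (2 * t) ≤ 2 ^ O.pPlus * O.Phi t := by
  rcases eq_or_lt_of_le ht with h0 | ht
  · simp [← h0, OrliczFunction.Phi]
  set p := O.pPlus with hp
  have hp1 : 1 ≤ p := one_le_pPlus O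
  set h : ℝ → ℝ := fun r => O.Phi (max r (t/2)) / max r (t/2) with hh
  have hmax : ∀ r : ℝ, 0 < max r (t/2) := fun r => lt_of_lt_of_le (by linarith) (le_max_right _ _)
  have hcont : Continuous h := by
    apply Continuous.div
    · exact (Phi_contOn O).comp_continuous (continuous_id.max continuous_const)
        (fun r => mem_Ici.2 (hmax r).le)
    · exact continuous_id.max continuous_const
    · exact fun r => (hmax r).ne'
  have heq : ∀ r : ℝ, t ≤ r → h r = O.Phi r / r := by
    intro r hr
    rw [hh]
    simp only
    rw [max_eq_left (by linarith)]
  set K : ℝ → ℝ := fun s => ∫ r in t..s, h r with hKdef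
  have hKderiv : ∀ s : ℝ, HasDerivAt K (h s) s := fun s =>
    intervalIntegral.integral_hasDerivAt_right (hcont.intervalIntegrable _ _)
      hcont.aestronglyMeasurable.stronglyMeasurableAtFilter hcont.continuousAt
  set f : ℝ → ℝ := fun s => O.Phi t + p * K s with hfdef
  have hfderiv : ∀ s : ℝ, HasDerivAt f (p * h s) s := fun s =>
    ((hKderiv s).const_mul p).const_add _
  have hPhile : ∀ s ∈ Icc t (2*t), O.Phi s ≤ f s := by
    intro s hs
    have hts : t ≤ s := hs.1
    have hs0 : 0 < s := lt_of_lt_of_le ht hts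
    have h1 : O.Phi s - O.Phi t = ∫ r in t..s, O.phi r := Phi_sub O ht.le hs0.le
    have h2 : (∫ r in t..s, O.phi r) ≤ ∫ r in t..s, p * h r := by
      apply intervalIntegral.integral_mono_on hts (phi_intble O ht.le hs0.le)
        ((continuous_const.mul hcont).intervalIntegrable _ _)
      intro r hr
      have hr0 : 0 < r := lt_of_lt_of_le ht hr.1
      show O.phi r ≤ p * h r
      rw [heq r hr.1]
      have hle : O.phi r ≤ p * O.Phi r / r := by
        rw [le_div_iff₀ hr0]
        nlinarith [phi_le_pPlus_mul O hr0]
      calc O.phi r ≤ p * O.Phi r / r := hle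
        _ = p * (O.Phi r / r) := by ring
    have h3 : (∫ r in t..s, p * h r) = p * K s := by
      rw [hKdef]
      simp [intervalIntegral.integral_const_mul]
    rw [hfdef]
    simp only
    linarith [h1, h2, h3.symm ▸ h2]
  set g : ℝ → ℝ := fun s => f s * s ^ (-p) with hgdef
  have hgderiv : ∀ s : ℝ, 0 < s →
      HasDerivAt g (p * h s * s ^ (-p) + f s * (-p * s ^ (-p-1))) s := by
    intro s hs0
    have h1 : HasDerivAt (fun s : ℝ => s ^ (-p)) (-p * s ^ (-p - 1)) s := by
      simpa using Real.hasDerivAt_rpow_const (p := -p) (Or.inl hs0.ne')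
    exact (hfderiv s).mul h1
  have hanti : AntitoneOn g (Icc t (2*t)) := by
    apply antitoneOn_of_deriv_nonpos (convex_Icc _ _)
    · intro s hs
      exact ((hgderiv s (lt_of_lt_of_le ht hs.1)).continuousAt).continuousWithinAt
    · rw [interior_Icc]
      intro s hs
      exact (hgderiv s (lt_trans ht hs.1)).differentiableAt.differentiableWithinAt
    · rw [interior_Icc]
      intro s hs
      have hs0 : 0 < s := lt_trans ht hs.1
      rw [(hgderiv s hs0).deriv]
      have hfs : O.Phi s ≤ f s := hPhile s ⟨hs.1.le, hs.2.le⟩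
      have heqs : h s = O.Phi s / s := heq s hs.1.le
      have hrp : (0:ℝ) < s ^ (-p) := Real.rpow_pos_of_pos hs0 _
      have key : s ^ (-p-1) = s ^ (-p) * s⁻¹ := by
        rw [show -p-1 = -p + (-1) by ring, Real.rpow_add hs0, Real.rpow_neg_one]
      have h4 : p * h s * s ^ (-p) ≤ p * f s * s ^ (-p-1) := by
        rw [heqs, key, div_eq_mul_inv]
        have hmul := mul_le_mul_of_nonneg_left hfs
          (show (0:ℝ) ≤ p * s⁻¹ * s ^ (-p) by positivity)
        nlinarith [hmul]
      nlinarith [h4]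
  have hKt : K t = 0 := intervalIntegral.integral_same
  have hgt : g t = O.Phi t * t ^ (-p) := by
    rw [hgdef]
    simp only [hfdef]
    rw [hKt]
    ring
  have h2t0 : (0:ℝ) < 2*t := by linarith
  have hle2 : g (2*t) ≤ g t :=
    hanti (left_mem_Icc.2 (by linarith)) (right_mem_Icc.2 (by linarith)) (by linarith)
  have hf2t : O.Phi (2*t) ≤ f (2*t) := hPhile _ ⟨by linarith, le_rfl⟩
  have hpos2 : (0:ℝ) < (2*t) ^ p := Real.rpow_pos_of_pos h2t0 p
  have hfg : f (2*t) = g (2*t) * (2*t) ^ p := by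
    rw [hgdef]
    simp only
    rw [mul_assoc, ← Real.rpow_add h2t0]
    simp
  have hfinal : O.Phi (2*t) ≤ O.Phi t * t ^ (-p) * (2*t) ^ p := by
    calc O.Phi (2*t) ≤ f (2*t) := hf2t
      _ = g (2*t) * (2*t)^p := hfg
      _ ≤ g t * (2*t)^p := mul_le_mul_of_nonneg_right hle2 hpos2.le
      _ = O.Phi t * t ^ (-p) * (2*t)^p := by rw [hgt]
  have htp : (0:ℝ) < t ^ p := Real.rpow_pos_of_pos ht p
  have hsimp : t ^ (-p) * (2*t) ^ p = 2 ^ p := by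
    rw [Real.mul_rpow (by norm_num : (0:ℝ) ≤ 2) ht.le, Real.rpow_neg ht.le]
    field_simp
  calc O.Phi (2*t) ≤ O.Phi t * t ^ (-p) * (2*t) ^ p := hfinal
    _ = (t ^ (-p) * (2*t) ^ p) * O.Phi t := by ring
    _ = 2 ^ p * O.Phi t := by rw [hsimp]


lemma jensen_avg {N : ℕ} (O : OrliczFunction) {A : Set (E N)}
    (hA0 : 0 < volume A) (hAfin : volume A < ⊤)
    (u : E N → ℝ) (hu : Continuous u) (hsupp : HasCompactSupport u) (c : ℝ) :
    O.Phi |(⨍ x in A, u x) - c| ≤ ⨍ x in A, O.Phi |u x - c| := by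
  set μ := volume.restrict A with hμ
  haveI : IsFiniteMeasure μ := ⟨by rw [hμ, Measure.restrict_apply_univ]; exact hAfin⟩
  haveI : NeZero μ := ⟨by rw [hμ, Ne, Measure.restrict_eq_zero]; exact hA0.ne'⟩
  obtain ⟨R, hR⟩ := hsupp.exists_bound_of_continuous hu
  have hui : Integrable u μ :=
    ⟨hu.aestronglyMeasurable, HasFiniteIntegral.of_bounded (Filter.Eventually.of_forall hR)⟩
  have hgcont : Continuous (fun r => O.Phi |r - c|) := PhiAbs_continuous O c
  have hgi : Integrable ((fun r => O.Phi |r - c|) ∘ u) μ := by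
    refine ⟨(hgcont.comp hu).aestronglyMeasurable,
      HasFiniteIntegral.of_bounded (C := O.Phi (R + |c|))
        (Filter.Eventually.of_forall fun x => ?_)⟩
    have h1 : |u x - c| ≤ R + |c| := by
      have h2 := hR x
      rw [Real.norm_eq_abs] at h2
      calc |u x - c| ≤ |u x| + |c| := abs_sub _ _
        _ ≤ R + |c| := by linarith
    simp only [Function.comp_apply, Real.norm_eq_abs]
    rw [abs_of_nonneg (Phi_nonneg O (abs_nonneg _))]
    exact Phi_mono O (abs_nonneg _) h1
  have h := (PhiAbs_convexOn O c).map_average_le hgcont.continuousOn isClosed_univ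
    (Filter.Eventually.of_forall fun x => mem_univ (u x)) hui hgi
  simpa using h

end Aux

theorem stmt8 {N : ℕ} (O : OrliczFunction) (P Q : Set (E N))
    (hPm : MeasurableSet P) (hQm : MeasurableSet Q) (hdisj : Disjoint P Q)
    (hP0 : 0 < volume P) (hPfin : volume P < ⊤)
    (hQ0 : 0 < volume Q) (hQfin : volume Q < ⊤)
    (u : E N → ℝ) (hu : ContDiff ℝ 1 u) (hsupp : HasCompactSupport u) :
    O.Phi |(⨍ x in P, u x) - ⨍ x in Q, u x| ≤
      (2:ℝ) ^ O.pPlus / min (volume P).toReal (volume Q).toReal *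
        ∫ x in P ∪ Q, O.Phi |u x - ⨍ y in P ∪ Q, u y| := by
  have hucont : Continuous u := hu.continuous
  set m := ⨍ y in P ∪ Q, u y with hm
  set g : E N → ℝ := fun x => O.Phi |u x - m| with hgdef
  have hPQm : MeasurableSet (P ∪ Q) := hPm.union hQm
  have hPQfin : volume (P ∪ Q) < ⊤ :=
    lt_of_le_of_lt (measure_union_le P Q) (ENNReal.add_lt_top.2 ⟨hPfin, hQfin⟩)
  obtain ⟨R, hR⟩ := hsupp.exists_bound_of_continuous hucont
  have hgcont : Continuous g := (PhiAbs_continuous O m).comp hucont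
  have hgbound : ∀ x, ‖g x‖ ≤ O.Phi (R + |m|) := by
    intro x
    have h1 : |u x - m| ≤ R + |m| := by
      have h2 := hR x
      rw [Real.norm_eq_abs] at h2
      calc |u x - m| ≤ |u x| + |m| := abs_sub _ _
        _ ≤ R + |m| := by linarith
    rw [Real.norm_eq_abs, abs_of_nonneg (Phi_nonneg O (abs_nonneg _))]
    exact Phi_mono O (abs_nonneg _) h1
  have hgi : IntegrableOn g (P ∪ Q) volume := by
    haveI : IsFiniteMeasure (volume.restrict (P ∪ Q)) :=
      ⟨by rwa [Measure.restrict_apply_univ]⟩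
    exact ⟨hgcont.aestronglyMeasurable,
      HasFiniteIntegral.of_bounded (Filter.Eventually.of_forall hgbound)⟩
  have hgnonneg : ∀ x, 0 ≤ g x := fun x => Phi_nonneg O (abs_nonneg _)
  set I := ∫ x in P ∪ Q, g x with hI
  have hInn : 0 ≤ I := setIntegral_nonneg hPQm (fun x _ => hgnonneg x)
  have hsubP : ∫ x in P, g x ≤ I :=
    setIntegral_mono_set hgi (Filter.Eventually.of_forall fun x => hgnonneg x)
      (HasSubset.Subset.eventuallyLE subset_union_left)
  have hsubQ : ∫ x in Q, g x ≤ I :=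
    setIntegral_mono_set hgi (Filter.Eventually.of_forall fun x => hgnonneg x)
      (HasSubset.Subset.eventuallyLE subset_union_right)
  have hJP : O.Phi |(⨍ x in P, u x) - m| ≤ ⨍ x in P, g x :=
    jensen_avg O hP0 hPfin u hucont hsupp m
  have hJQ : O.Phi |(⨍ x in Q, u x) - m| ≤ ⨍ x in Q, g x :=
    jensen_avg O hQ0 hQfin u hucont hsupp m
  have hPt : 0 < (volume P).toReal := ENNReal.toReal_pos hP0.ne' hPfin.ne
  have hQt : 0 < (volume Q).toReal := ENNReal.toReal_pos hQ0.ne' hQfin.ne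
  have hstepP : O.Phi |(⨍ x in P, u x) - m| ≤ (volume P).toReal⁻¹ * I := by
    refine le_trans hJP ?_
    rw [setAverage_eq, smul_eq_mul]
    exact mul_le_mul_of_nonneg_left hsubP (inv_nonneg.2 hPt.le)
  have hstepQ : O.Phi |(⨍ x in Q, u x) - m| ≤ (volume Q).toReal⁻¹ * I := by
    refine le_trans hJQ ?_
    rw [setAverage_eq, smul_eq_mul]
    exact mul_le_mul_of_nonneg_left hsubQ (inv_nonneg.2 hQt.le)
  set a := ⨍ x in P, u x with ha
  set b := ⨍ x in Q, u x with hb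
  have hpow : (0:ℝ) < 2 ^ O.pPlus := Real.rpow_pos_of_pos two_pos _
  have hcomb : O.Phi |a - b| ≤ 2 ^ O.pPlus / 2 * (O.Phi |a - m| + O.Phi |b - m|) := by
    have hconv := (PhiAbs_convexOn O 0).2 (mem_univ (2*(a-m))) (mem_univ (-(2*(b-m))))
      (by norm_num : (0:ℝ) ≤ 1/2) (by norm_num : (0:ℝ) ≤ 1/2) (by norm_num)
    simp only [smul_eq_mul, sub_zero] at hconv
    have he : (1/2 : ℝ) * (2*(a-m)) + (1/2 : ℝ) * (-(2*(b-m))) = a - b := by ring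
    rw [he] at hconv
    have hd1 : O.Phi |2*(a-m)| ≤ 2 ^ O.pPlus * O.Phi |a-m| := by
      rw [abs_mul, abs_two]
      exact Phi_double O (abs_nonneg _)
    have hd2 : O.Phi |-(2*(b-m))| ≤ 2 ^ O.pPlus * O.Phi |b-m| := by
      rw [abs_neg, abs_mul, abs_two]
      exact Phi_double O (abs_nonneg _)
    calc O.Phi |a-b| ≤ 1/2 * O.Phi |2*(a-m)| + 1/2 * O.Phi |-(2*(b-m))| := hconv
      _ ≤ 1/2 * (2 ^ O.pPlus * O.Phi |a-m|) + 1/2 * (2 ^ O.pPlus * O.Phi |b-m|) :=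
          add_le_add (mul_le_mul_of_nonneg_left hd1 (by norm_num))
            (mul_le_mul_of_nonneg_left hd2 (by norm_num))
      _ = 2 ^ O.pPlus / 2 * (O.Phi |a-m| + O.Phi |b-m|) := by ring
  set c := min (volume P).toReal (volume Q).toReal with hc
  have hc0 : 0 < c := lt_min hPt hQt
  have hinvP : (volume P).toReal⁻¹ ≤ c⁻¹ :=
    inv_anti₀ hc0 (min_le_left _ _)
  have hinvQ : (volume Q).toReal⁻¹ ≤ c⁻¹ :=
    inv_anti₀ hc0 (min_le_right _ _)
  calc O.Phi |a - b| ≤ 2 ^ O.pPlus / 2 * (O.Phi |a - m| + O.Phi |b - m|) := hcomb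
    _ ≤ 2 ^ O.pPlus / 2 * ((volume P).toReal⁻¹ * I + (volume Q).toReal⁻¹ * I) := by
        apply mul_le_mul_of_nonneg_left (add_le_add hstepP hstepQ) (by positivity)
    _ ≤ 2 ^ O.pPlus / 2 * (c⁻¹ * I + c⁻¹ * I) := by
        apply mul_le_mul_of_nonneg_left
          (add_le_add (mul_le_mul_of_nonneg_right hinvP hInn)
            (mul_le_mul_of_nonneg_right hinvQ hInn)) (by positivity)
    _ = 2 ^ O.pPlus / c * I := by
        field_simp
        ring
end

section
/- Let Ω ⊂ ℝᴺ be open, s ∈ (0,1), and ξ ∈ C^{0,1}(Ω) with 0 ≤ ξ ≤ 1. For any Orlicz function Φ there exists C = C(s,N,Φ,Ω) > 0 such that for all u ∈ W^{s,Φ}(Ω): ∫_Ω Φ(|ξu|) dx + ∫_Ω∫_Ω Φ(|ξ(x)u(x)−ξ(y)u(y)|/|x−y|ˢ) dμ ≤ C ∫_Ω Φ(|u|) dx + C ∫_Ω∫_Ω Φ(|u(x)−u(y)|/|x−y|ˢ) dμ, where dμ = dx dy/|x−y|ᴺ. -/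
open MeasureTheory Real Set Filter
open scoped ENNReal

/-! ### Auxiliary lemmas about Orlicz functions -/

namespace OrliczFunction
variable (O : OrliczFunction)

lemma phi_ii {t : ℝ} (ht : 0 ≤ t) : IntervalIntegrable O.phi volume 0 t := by
  apply MonotoneOn.intervalIntegrable
  intro a ha b hb hab
  rw [uIcc_of_le ht] at ha hb
  exact O.mono ha.1 hb.1 hab

lemma Phi_abs_nonneg (t : ℝ) : 0 ≤ O.Phi |t| := O.Phi_nonneg (abs_nonneg t)

lemma Phi_scale_s10 {l t : ℝ} (hl0 : 0 ≤ l) (hl1 : l ≤ 1) (ht : 0 ≤ t) :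
    O.Phi (l * t) ≤ l * O.Phi t := by
  rcases eq_or_lt_of_le hl0 with h | h
  · simp [← h, OrliczFunction.Phi]
  · have key : (∫ x in (0:ℝ)..t, O.phi (l * x)) ≤ ∫ x in (0:ℝ)..t, O.phi x := by
      apply intervalIntegral.integral_mono_on ht
      · apply MonotoneOn.intervalIntegrable
        intro a ha b hb hab
        rw [uIcc_of_le ht] at ha hb
        exact O.mono (mem_Ici.mpr (by nlinarith [ha.1])) (mem_Ici.mpr (by nlinarith [hb.1]))
          (by nlinarith [ha.1])
      · exact O.phi_ii ht
      · intro x hx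
        exact O.mono (mem_Ici.mpr (by nlinarith [hx.1])) (mem_Ici.mpr hx.1)
          (by nlinarith [hx.1])
    have subst : O.Phi (l * t) = l * ∫ x in (0:ℝ)..t, O.phi (l * x) := by
      unfold OrliczFunction.Phi
      rw [intervalIntegral.integral_comp_mul_left _ h.ne', mul_zero, smul_eq_mul]
      rw [← mul_assoc, mul_inv_cancel₀ h.ne', one_mul]
    rw [subst]
    exact mul_le_mul_of_nonneg_left key hl0

lemma exists_doubling : ∃ C, 1 ≤ C ∧ ∀ t, 0 ≤ t → O.Phi (2 * t) ≤ C * O.Phi t := by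
  obtain ⟨C, hC, h⟩ := O.delta2
  refine ⟨max C 1, le_max_right _ _, fun t ht => ?_⟩
  calc O.Phi (2 * t) ≤ C * O.Phi t := h t ht
    _ ≤ max C 1 * O.Phi t := mul_le_mul_of_nonneg_right (le_max_left _ _) (O.Phi_nonneg ht)

lemma exists_const_mul {K : ℝ} (hK : 1 ≤ K) :
    ∃ C, 1 ≤ C ∧ ∀ t, 0 ≤ t → O.Phi (K * t) ≤ C * O.Phi t := by
  obtain ⟨C, hC1, hC⟩ := O.exists_doubling
  obtain ⟨n, hn⟩ := pow_unbounded_of_one_lt K (one_lt_two (α := ℝ))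
  have hpow : ∀ m : ℕ, ∀ t, 0 ≤ t → O.Phi (2 ^ m * t) ≤ C ^ m * O.Phi t := by
    intro m
    induction m with
    | zero => intro t ht; simp
    | succ m ih =>
      intro t ht
      calc O.Phi (2 ^ (m + 1) * t) = O.Phi (2 ^ m * (2 * t)) := by ring_nf
        _ ≤ C ^ m * O.Phi (2 * t) := ih _ (by positivity)
        _ ≤ C ^ m * (C * O.Phi t) :=
          mul_le_mul_of_nonneg_left (hC t ht) (by positivity)
        _ = C ^ (m + 1) * O.Phi t := by ring
  refine ⟨C ^ n, one_le_pow₀ hC1, fun t ht => ?_⟩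
  calc O.Phi (K * t) ≤ O.Phi (2 ^ n * t) :=
        O.Phi_mono (by positivity) (by nlinarith)
    _ ≤ C ^ n * O.Phi t := hpow n t ht

lemma Phi_add_le {a b C : ℝ} (ha : 0 ≤ a) (hb : 0 ≤ b) (hC1 : 0 ≤ C)
    (hC : ∀ t, 0 ≤ t → O.Phi (2 * t) ≤ C * O.Phi t) :
    O.Phi (a + b) ≤ C * O.Phi a + C * O.Phi b := by
  rcases le_total a b with h | h
  · calc O.Phi (a + b) ≤ O.Phi (2 * b) := O.Phi_mono (by linarith) (by linarith)
      _ ≤ C * O.Phi b := hC b hb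
      _ ≤ C * O.Phi a + C * O.Phi b := by
          have h1 := O.Phi_nonneg ha
          nlinarith
  · calc O.Phi (a + b) ≤ O.Phi (2 * a) := O.Phi_mono (by linarith) (by linarith)
      _ ≤ C * O.Phi a := hC a ha
      _ ≤ C * O.Phi a + C * O.Phi b := by
          have h2 := O.Phi_nonneg hb
          nlinarith

end OrliczFunction

/-! ### Integrability of the singular kernel -/

section Kernel

open Metric

variable {V : Type*} [NormedAddCommGroup V] [NormedSpace ℝ V] [MeasurableSpace V] [BorelSpace V]
  [FiniteDimensional ℝ V] [Nontrivial V] (μ : Measure V) [μ.IsAddHaarMeasure]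

lemma integrableOn_rpow_norm_ball' {α : ℝ} (hα0 : α < 0)
    (hαN : -(Module.finrank ℝ V : ℝ) < α) :
    IntegrableOn (fun x : V => ‖x‖ ^ α) (ball 0 1) μ := by
  set n := Module.finrank ℝ V with hn
  have hnpos : 0 < n := Module.finrank_pos
  have hmeas : Measurable fun x : V => ‖x‖ ^ α := by fun_prop
  constructor
  · exact hmeas.aestronglyMeasurable
  · have hnn : ∀ x : V, 0 ≤ ‖x‖ ^ α := fun x => rpow_nonneg (norm_nonneg x) α
    rw [HasFiniteIntegral, lintegral_enorm_of_nonneg hnn]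
    rw [lintegral_eq_lintegral_meas_le _ (Eventually.of_forall hnn) hmeas.aemeasurable]
    set ν := μ.restrict (ball (0:V) 1)
    calc ∫⁻ t in Ioi (0:ℝ), ν {a | t ≤ ‖a‖ ^ α}
        ≤ ∫⁻ t in Ioc (0:ℝ) 1 ∪ Ioi 1, ν {a | t ≤ ‖a‖ ^ α} :=
          lintegral_mono_set Ioi_subset_Ioc_union_Ioi
      _ ≤ (∫⁻ t in Ioc (0:ℝ) 1, ν {a | t ≤ ‖a‖ ^ α}) + ∫⁻ t in Ioi 1, ν {a | t ≤ ‖a‖ ^ α} :=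
          lintegral_union_le _ _ _
      _ < ∞ := by
          refine ENNReal.add_lt_top.2 ⟨?_, ?_⟩
          · calc ∫⁻ t in Ioc (0:ℝ) 1, ν {a | t ≤ ‖a‖ ^ α}
                ≤ ∫⁻ _ in Ioc (0:ℝ) 1, μ (ball (0:V) 1) := by
                  refine lintegral_mono fun t => ?_
                  calc ν {a | t ≤ ‖a‖ ^ α} ≤ ν univ := measure_mono (subset_univ _)
                    _ = μ (ball (0:V) 1) := by simp [ν]
              _ < ∞ := by
                  rw [setLIntegral_const]
                  exact ENNReal.mul_lt_top measure_ball_lt_top (by simp)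
          · have hsub : ∀ t : ℝ, 1 < t → {a : V | t ≤ ‖a‖ ^ α} ⊆ closedBall 0 (t ^ α⁻¹) := by
              intro t ht a ha
              simp only [mem_setOf_eq] at ha
              have hat : (0:ℝ) < t := by linarith
              have ha0 : a ≠ 0 := by
                rintro rfl
                rw [norm_zero, zero_rpow hα0.ne] at ha
                linarith
              have hnorm : 0 < ‖a‖ := norm_pos_iff.mpr ha0
              rw [mem_closedBall_zero_iff]
              exact (Real.le_rpow_inv_iff_of_neg hnorm hat hα0).mpr ha
            have hexp : α⁻¹ * n < -1 := by
              rw [mul_comm, ← div_eq_mul_inv, div_lt_iff_of_neg hα0]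
              linarith
            calc ∫⁻ t in Ioi (1:ℝ), ν {a | t ≤ ‖a‖ ^ α}
                ≤ ∫⁻ t in Ioi (1:ℝ),
                    ENNReal.ofReal (t ^ (α⁻¹ * n)) * μ (ball (0:V) 1) := by
                  refine setLIntegral_mono' measurableSet_Ioi fun t ht => ?_
                  have ht1 : (1:ℝ) < t := ht
                  have htpos : (0:ℝ) < t := by linarith
                  have hr : (0:ℝ) ≤ t ^ α⁻¹ := rpow_nonneg htpos.le _
                  calc ν {a | t ≤ ‖a‖ ^ α} ≤ μ {a | t ≤ ‖a‖ ^ α} :=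
                        Measure.restrict_le_self _
                    _ ≤ μ (closedBall 0 (t ^ α⁻¹)) := measure_mono (hsub t ht1)
                    _ = ENNReal.ofReal ((t ^ α⁻¹) ^ n) * μ (ball (0:V) 1) := by
                        rw [Measure.addHaar_closedBall μ 0 hr]
                    _ = ENNReal.ofReal (t ^ (α⁻¹ * n)) * μ (ball (0:V) 1) := by
                        rw [← Real.rpow_natCast (t ^ α⁻¹) n, ← Real.rpow_mul htpos.le]
              _ = (∫⁻ t in Ioi (1:ℝ), ENNReal.ofReal (t ^ (α⁻¹ * n))) * μ (ball (0:V) 1) :=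
                  lintegral_mul_const' _ _ measure_ball_lt_top.ne
              _ < ∞ := ENNReal.mul_lt_top
                  ((integrableOn_Ioi_rpow_of_lt hexp one_pos).setLIntegral_lt_top)
                  measure_ball_lt_top

lemma integrable_gfun {s : ℝ} (hs : s ∈ Ioo (0:ℝ) 1) :
    Integrable
      (fun z : V => min (‖z‖ ^ (1 - s)) (‖z‖ ^ (-s)) / ‖z‖ ^ (Module.finrank ℝ V)) μ := by
  set n := Module.finrank ℝ V with hn
  have hnpos : 0 < n := Module.finrank_pos
  have hn1 : (1:ℝ) ≤ n := by exact_mod_cast hnpos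
  have hmeas : Measurable
      (fun z : V => min (‖z‖ ^ (1 - s)) (‖z‖ ^ (-s)) / ‖z‖ ^ n) := by fun_prop
  set h1 : V → ℝ := (ball (0:V) 1).indicator (fun z => ‖z‖ ^ (1 - s - n)) with hh1
  set h2 : V → ℝ := fun z => 2 ^ ((n:ℝ) + s) * (1 + ‖z‖) ^ (-((n:ℝ) + s)) with hh2
  have h1int : Integrable h1 μ := by
    rw [hh1]
    refine IntegrableOn.integrable_indicator ?_ measurableSet_ball
    exact integrableOn_rpow_norm_ball' μ (by linarith [hs.1]) (by push_cast; linarith [hs.2])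
  have h2int : Integrable h2 μ := by
    exact (integrable_one_add_norm (by push_cast; linarith [hs.1])).const_mul _
  refine Integrable.mono' (h1int.add h2int) hmeas.aestronglyMeasurable
    (Eventually.of_forall fun z => ?_)
  have hfnn : 0 ≤ min (‖z‖ ^ (1 - s)) (‖z‖ ^ (-s)) / ‖z‖ ^ n := by
    apply div_nonneg _ (by positivity)
    exact le_min (rpow_nonneg (norm_nonneg z) _) (rpow_nonneg (norm_nonneg z) _)
  rw [Real.norm_of_nonneg hfnn]
  have h2nn : 0 ≤ h2 z := by rw [hh2]; positivity
  rcases lt_or_ge ‖z‖ 1 with hz | hz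
  · rcases eq_or_ne z 0 with rfl | hz0
    · simp only [norm_zero]
      rw [Real.zero_rpow (by linarith [hs.2] : (1:ℝ) - s ≠ 0),
        Real.zero_rpow (by linarith [hs.1] : -s ≠ 0)]
      simp only [min_self, zero_div]
      have : 0 ≤ h1 0 := by
        rw [hh1]
        apply Set.indicator_nonneg
        intro x _; exact rpow_nonneg (norm_nonneg x) _
      simp only [Pi.add_apply]
      linarith
    · have hznorm : 0 < ‖z‖ := norm_pos_iff.mpr hz0
      have hle : min (‖z‖ ^ (1 - s)) (‖z‖ ^ (-s)) / ‖z‖ ^ n ≤ ‖z‖ ^ (1 - s - (n:ℝ)) := by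
        rw [Real.rpow_sub hznorm (1 - s) (n:ℝ), Real.rpow_natCast]
        gcongr
        exact min_le_left _ _
      have hmem : z ∈ ball (0:V) 1 := mem_ball_zero_iff.mpr hz
      calc min (‖z‖ ^ (1 - s)) (‖z‖ ^ (-s)) / ‖z‖ ^ n ≤ ‖z‖ ^ (1 - s - (n:ℝ)) := hle
        _ = h1 z := by rw [hh1, Set.indicator_of_mem hmem]
        _ ≤ h1 z + h2 z := by linarith
        _ = (h1 + h2) z := rfl
  · have hznorm : (0:ℝ) < ‖z‖ := lt_of_lt_of_le one_pos hz
    set p : ℝ := (n:ℝ) + s with hp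
    have hppos : 0 < p := by have h0 := hs.1; rw [hp]; linarith
    have hle : min (‖z‖ ^ (1 - s)) (‖z‖ ^ (-s)) / ‖z‖ ^ n ≤ ‖z‖ ^ (-s - (n:ℝ)) := by
      rw [Real.rpow_sub hznorm (-s) (n:ℝ), Real.rpow_natCast]
      gcongr
      exact min_le_right _ _
    have hb : (1 + ‖z‖) ^ p ≤ 2 ^ p * ‖z‖ ^ p := by
      rw [← Real.mul_rpow (by norm_num) (norm_nonneg z)]
      exact Real.rpow_le_rpow (by positivity) (by linarith) hppos.le
    have hfar : ‖z‖ ^ (-s - (n:ℝ)) ≤ h2 z := by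
      have e1 : ‖z‖ ^ (-s - (n:ℝ)) = (‖z‖ ^ p)⁻¹ := by
        rw [← Real.rpow_neg (norm_nonneg z)]
        congr 1
        rw [hp]; ring
      have e2 : h2 z = 2 ^ p * ((1 + ‖z‖) ^ p)⁻¹ := by
        rw [hh2, ← Real.rpow_neg (by positivity)]
      have h4 : 0 < ‖z‖ ^ p := Real.rpow_pos_of_pos hznorm p
      have h3 : 0 < (1 + ‖z‖) ^ p := Real.rpow_pos_of_pos (by positivity) p
      rw [e1, e2, inv_eq_one_div, ← div_eq_mul_inv, div_le_div_iff₀ h4 h3]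
      nlinarith
    have hmem : z ∉ ball (0:V) 1 := by
      simp only [mem_ball_zero_iff, not_lt]
      exact hz
    calc min (‖z‖ ^ (1 - s)) (‖z‖ ^ (-s)) / ‖z‖ ^ n ≤ ‖z‖ ^ (-s - (n:ℝ)) := hle
      _ ≤ h2 z := hfar
      _ = 0 + h2 z := by ring
      _ = h1 z + h2 z := by rw [hh1, Set.indicator_of_notMem hmem]
      _ = (h1 + h2) z := rfl

end Kernel

/-- The key pointwise inequality. -/
lemma key_ineq (O : OrliczFunction) {s c2 cK K L' d p q a b : ℝ} {N : ℕ}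
    (hs : s ∈ Set.Ioo (0:ℝ) 1)
    (hc2_0 : 0 ≤ c2) (hc2 : ∀ t, 0 ≤ t → O.Phi (2 * t) ≤ c2 * O.Phi t)
    (hcK0 : 0 ≤ cK) (hcK : ∀ t, 0 ≤ t → O.Phi (K * t) ≤ cK * O.Phi t)
    (hKL : L' ≤ K) (hK1 : 1 ≤ K) (hL0 : 0 ≤ L')
    (hd : 0 < d) (hb1 : |b| ≤ 1) (hab : |a - b| ≤ min 1 (L' * d)) :
    O.Phi (|a * p - b * q| / d ^ s) / d ^ N
      ≤ c2 * (O.Phi (|p - q| / d ^ s) / d ^ N)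
        + (c2 * cK) * O.Phi |p| * (min (d ^ (1 - s)) (d ^ (-s)) / d ^ N) := by
  have hds : 0 < d ^ s := rpow_pos_of_pos hd s
  have hdN : 0 < d ^ N := pow_pos hd N
  have hρ0 : 0 ≤ min (d ^ (1 - s)) (d ^ (-s)) :=
    le_min (rpow_nonneg hd.le _) (rpow_nonneg hd.le _)
  have hd1s : d ^ (1 - s) * d ^ s = d := by
    rw [← Real.rpow_add hd]; norm_num
  have hdns : d ^ (-s) * d ^ s = 1 := by
    rw [← Real.rpow_add hd]; norm_num
  have hρ1 : min (d ^ (1 - s)) (d ^ (-s)) ≤ 1 := by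
    rcases le_total d 1 with h | h
    · exact (min_le_left _ _).trans (Real.rpow_le_one hd.le h (by linarith [hs.2]))
    · exact (min_le_right _ _).trans
        (Real.rpow_le_one_of_one_le_of_nonpos h (by linarith [hs.1]))
  set ρ : ℝ := min (d ^ (1 - s)) (d ^ (-s)) with hρdef
  have hmnn : (0:ℝ) ≤ min 1 (L' * d) := le_min one_pos.le (by positivity)
  have step1 : |a * p - b * q| ≤ |p - q| + min 1 (L' * d) * |p| := by
    have hre : a * p - b * q = b * (p - q) + (a - b) * p := by ring
    rw [hre]
    refine (abs_add_le _ _).trans ?_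
    rw [abs_mul, abs_mul]
    have e1 : |b| * |p - q| ≤ 1 * |p - q| :=
      mul_le_mul_of_nonneg_right hb1 (abs_nonneg _)
    have e2 : |a - b| * |p| ≤ min 1 (L' * d) * |p| :=
      mul_le_mul_of_nonneg_right hab (abs_nonneg _)
    linarith
  have hm : min 1 (L' * d) / d ^ s ≤ K * ρ := by
    rcases le_total d 1 with h | h
    · have hρeq : ρ = d ^ (1 - s) := by
        rw [hρdef]
        apply min_eq_left
        have h1 : d ^ (-s) * d ≤ d ^ (-s) * 1 :=
          mul_le_mul_of_nonneg_left h (rpow_nonneg hd.le _)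
        nlinarith [rpow_nonneg hd.le (-s)]
      have e1 : min 1 (L' * d) / d ^ s ≤ (L' * d) / d ^ s :=
        (div_le_div_iff_of_pos_right hds).mpr (min_le_right _ _)
      have e2 : (L' * d) / d ^ s = L' * d ^ (1 - s) := by
        rw [div_eq_iff hds.ne']
        nlinarith
      have e3 : L' * d ^ (1 - s) ≤ K * ρ := by
        rw [hρeq]
        exact mul_le_mul_of_nonneg_right hKL (rpow_nonneg hd.le _)
      calc min 1 (L' * d) / d ^ s ≤ (L' * d) / d ^ s := e1
        _ = L' * d ^ (1 - s) := e2
        _ ≤ K * ρ := e3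
    · have hρeq : ρ = d ^ (-s) := by
        rw [hρdef]
        apply min_eq_right
        exact Real.rpow_le_rpow_of_exponent_le h (by linarith [hs.1])
      have e1 : min 1 (L' * d) / d ^ s ≤ 1 / d ^ s :=
        (div_le_div_iff_of_pos_right hds).mpr (min_le_left _ _)
      have e2 : (1:ℝ) / d ^ s = d ^ (-s) := by
        rw [div_eq_iff hds.ne', hdns]
      have e3 : d ^ (-s) ≤ K * ρ := by
        rw [hρeq]
        nlinarith [rpow_nonneg hd.le (-s)]
      calc min 1 (L' * d) / d ^ s ≤ 1 / d ^ s := e1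
        _ = d ^ (-s) := e2
        _ ≤ K * ρ := e3
  have harg : |a * p - b * q| / d ^ s
      ≤ |p - q| / d ^ s + (min 1 (L' * d) / d ^ s) * |p| := by
    have h0 : |a * p - b * q| / d ^ s
        ≤ (|p - q| + min 1 (L' * d) * |p|) / d ^ s :=
      (div_le_div_iff_of_pos_right hds).mpr step1
    have h1 : (|p - q| + min 1 (L' * d) * |p|) / d ^ s
        = |p - q| / d ^ s + (min 1 (L' * d) / d ^ s) * |p| := by ring
    linarith
  have ha_nn : 0 ≤ |p - q| / d ^ s := div_nonneg (abs_nonneg _) hds.le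
  have hb_nn : 0 ≤ (min 1 (L' * d) / d ^ s) * |p| :=
    mul_nonneg (div_nonneg hmnn hds.le) (abs_nonneg _)
  have hnum : O.Phi (|a * p - b * q| / d ^ s)
      ≤ c2 * O.Phi (|p - q| / d ^ s) + (c2 * cK) * (ρ * O.Phi |p|) := by
    have h3 : O.Phi (|a * p - b * q| / d ^ s)
        ≤ O.Phi (|p - q| / d ^ s + (min 1 (L' * d) / d ^ s) * |p|) :=
      O.Phi_mono (div_nonneg (abs_nonneg _) hds.le) harg
    have h4 := O.Phi_add_le ha_nn hb_nn hc2_0 hc2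
    have h5 : O.Phi ((min 1 (L' * d) / d ^ s) * |p|) ≤ cK * (ρ * O.Phi |p|) := by
      have h51 : (min 1 (L' * d) / d ^ s) * |p| ≤ ρ * (K * |p|) := by
        have := mul_le_mul_of_nonneg_right hm (abs_nonneg p)
        nlinarith
      have h52 : O.Phi ((min 1 (L' * d) / d ^ s) * |p|) ≤ O.Phi (ρ * (K * |p|)) :=
        O.Phi_mono hb_nn h51
      have h53 : O.Phi (ρ * (K * |p|)) ≤ ρ * O.Phi (K * |p|) :=
        O.Phi_scale_s10 hρ0 hρ1 (by positivity)
      have h54 : O.Phi (K * |p|) ≤ cK * O.Phi |p| := hcK _ (abs_nonneg _)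
      have h55 : ρ * O.Phi (K * |p|) ≤ ρ * (cK * O.Phi |p|) :=
        mul_le_mul_of_nonneg_left h54 hρ0
      calc O.Phi ((min 1 (L' * d) / d ^ s) * |p|) ≤ O.Phi (ρ * (K * |p|)) := h52
        _ ≤ ρ * O.Phi (K * |p|) := h53
        _ ≤ ρ * (cK * O.Phi |p|) := h55
        _ = cK * (ρ * O.Phi |p|) := by ring
    have h6 : c2 * O.Phi ((min 1 (L' * d) / d ^ s) * |p|)
        ≤ c2 * (cK * (ρ * O.Phi |p|)) := mul_le_mul_of_nonneg_left h5 hc2_0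
    nlinarith
  have hdiv : O.Phi (|a * p - b * q| / d ^ s) / d ^ N
      ≤ (c2 * O.Phi (|p - q| / d ^ s) + (c2 * cK) * (ρ * O.Phi |p|)) / d ^ N :=
    (div_le_div_iff_of_pos_right hdN).mpr hnum
  have heq : (c2 * O.Phi (|p - q| / d ^ s) + (c2 * cK) * (ρ * O.Phi |p|)) / d ^ N
      = c2 * (O.Phi (|p - q| / d ^ s) / d ^ N)
        + (c2 * cK) * O.Phi |p| * (ρ / d ^ N) := by ring
  linarith


theorem stmt10 {N : ℕ} (O : OrliczFunction) (s : ℝ) (hs : s ∈ Set.Ioo (0:ℝ) 1)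
    (Ω : Set (E N)) (hΩ : IsOpen Ω) (ξ : E N → ℝ) (L : NNReal)
    (hξ : LipschitzOnWith L ξ Ω) (hξ01 : ∀ x ∈ Ω, ξ x ∈ Set.Icc (0:ℝ) 1) :
    ∃ C > 0, ∀ u : E N → ℝ,
      MeasureTheory.IntegrableOn (fun x => O.Phi |u x|) Ω →
      MeasureTheory.IntegrableOn
        (fun p : E N × E N => O.Phi (|u p.1 - u p.2| / dist p.1 p.2 ^ s) / dist p.1 p.2 ^ N)
        (Ω ×ˢ Ω) →
      (∫ x in Ω, O.Phi |ξ x * u x|) + fracModular O s Ω (fun x => ξ x * u x) ≤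
        C * (∫ x in Ω, O.Phi |u x|) + C * fracModular O s Ω u := by
  -- Term 1 estimate, valid for any `N`.
  have hterm1 : ∀ u : E N → ℝ, MeasureTheory.IntegrableOn (fun x => O.Phi |u x|) Ω →
      (∫ x in Ω, O.Phi |ξ x * u x|) ≤ ∫ x in Ω, O.Phi |u x| := by
    intro u hu
    apply integral_mono_of_nonneg (Eventually.of_forall fun x => O.Phi_abs_nonneg _) hu
    filter_upwards [ae_restrict_mem hΩ.measurableSet] with x hx
    apply O.Phi_mono (abs_nonneg _)
    rw [abs_mul]
    have h01 := hξ01 x hx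
    have hb : |ξ x| ≤ 1 := by rw [abs_of_nonneg h01.1]; exact h01.2
    nlinarith [abs_nonneg (u x)]
  rcases Nat.eq_zero_or_pos N with hN0 | hN
  · -- `N = 0`: everything degenerates.
    subst hN0
    refine ⟨1, one_pos, fun u hu _ => ?_⟩
    haveI : Subsingleton (E 0) := ⟨fun a b => WithLp.ofLp_injective 2 (Subsingleton.elim _ _)⟩
    have hz : ∀ v : E 0 → ℝ, fracModular O s Ω v = 0 := by
      intro v
      have key : ∀ x y : E 0,
          O.Phi (|v x - v y| / dist x y ^ s) / dist x y ^ (0:ℕ) = 0 := by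
        intro x y
        rw [Subsingleton.elim x y]
        simp [O.Phi_zero]
      simp only [fracModular, key, integral_zero]
    rw [hz, hz]
    have := hterm1 u hu
    have hnn : 0 ≤ ∫ x in Ω, O.Phi |u x| :=
      integral_nonneg fun x => O.Phi_abs_nonneg _
    linarith
  · -- Main case `0 < N`.
    haveI : Nontrivial (E N) :=
      Module.nontrivial_of_finrank_pos (R := ℝ)
        (by rw [finrank_euclideanSpace_fin]; exact hN)
    obtain ⟨c2, hc2_1, hc2⟩ := O.exists_doubling
    have hc2_0 : (0:ℝ) ≤ c2 := by linarith
    have hK1 : 1 ≤ max (L:ℝ) 1 := le_max_right _ _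
    obtain ⟨cK, hcK1, hcK⟩ := O.exists_const_mul hK1
    have hcK0 : (0:ℝ) ≤ cK := by linarith
    have hgint : Integrable
        (fun z : E N => min (‖z‖ ^ (1 - s)) (‖z‖ ^ (-s)) / ‖z‖ ^ N)
        (volume : Measure (E N)) := by
      have := integrable_gfun (volume : Measure (E N)) hs
      simpa only [finrank_euclideanSpace_fin] using this
    have hgnn : ∀ z : E N, 0 ≤ min (‖z‖ ^ (1 - s)) (‖z‖ ^ (-s)) / ‖z‖ ^ N := by
      intro z
      apply div_nonneg _ (by positivity)
      exact le_min (rpow_nonneg (norm_nonneg z) _) (rpow_nonneg (norm_nonneg z) _)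
    set A : ℝ := ∫ z : E N, min (‖z‖ ^ (1 - s)) (‖z‖ ^ (-s)) / ‖z‖ ^ N with hAdef
    have hA0 : 0 ≤ A := integral_nonneg hgnn
    have hB1 : 1 ≤ c2 * cK := one_le_mul_of_one_le_of_one_le hc2_1 hcK1
    have hB0 : 0 ≤ c2 * cK := by linarith
    refine ⟨1 + c2 + (c2 * cK) * A, by nlinarith, fun u hu hpair => ?_⟩
    have hfu_nn : ∀ x y : E N,
        0 ≤ O.Phi (|u x - u y| / dist x y ^ s) / dist x y ^ N := by
      intro x y
      apply div_nonneg _ (by positivity)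
      exact O.Phi_nonneg (div_nonneg (abs_nonneg _) (rpow_nonneg dist_nonneg _))
    have hfξ_nn : ∀ x y : E N,
        0 ≤ O.Phi (|ξ x * u x - ξ y * u y| / dist x y ^ s) / dist x y ^ N := by
      intro x y
      apply div_nonneg _ (by positivity)
      exact O.Phi_nonneg (div_nonneg (abs_nonneg _) (rpow_nonneg dist_nonneg _))
    -- product-measure form of the Gagliardo hypothesis
    have hpair' : Integrable
        (fun p : E N × E N => O.Phi (|u p.1 - u p.2| / dist p.1 p.2 ^ s) / dist p.1 p.2 ^ N)
        ((volume.restrict Ω).prod (volume.restrict Ω)) := by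
      rw [Measure.prod_restrict, ← Measure.volume_eq_prod]
      exact hpair
    have hae_int : ∀ᵐ x ∂(volume.restrict Ω),
        Integrable (fun y => O.Phi (|u x - u y| / dist x y ^ s) / dist x y ^ N)
          (volume.restrict Ω) := hpair'.prod_right_ae
    have hFint : Integrable
        (fun x => ∫ y, O.Phi (|u x - u y| / dist x y ^ s) / dist x y ^ N
          ∂(volume.restrict Ω)) (volume.restrict Ω) := hpair'.integral_prod_left
    -- pointwise inequality
    have hkey : ∀ x ∈ Ω, ∀ y ∈ Ω,
        O.Phi (|ξ x * u x - ξ y * u y| / dist x y ^ s) / dist x y ^ N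
          ≤ c2 * (O.Phi (|u x - u y| / dist x y ^ s) / dist x y ^ N)
            + (c2 * cK) * O.Phi |u x|
              * (min (‖y - x‖ ^ (1 - s)) (‖y - x‖ ^ (-s)) / ‖y - x‖ ^ N) := by
      intro x hx y hy
      have hnorm_eq : ‖y - x‖ = dist x y := by rw [dist_eq_norm, norm_sub_rev]
      rw [hnorm_eq]
      rcases eq_or_ne x y with rfl | hxy
      · have hz : |ξ x * u x - ξ x * u x| = 0 := by simp
        rw [hz]
        have h0 : (0:ℝ) / dist x x ^ s = 0 := zero_div _
        rw [h0, O.Phi_zero]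
        have h1 : (0:ℝ) / dist x x ^ N = 0 := zero_div _
        rw [h1]
        have hz' : |u x - u x| = 0 := by simp
        rw [hz', h0, O.Phi_zero, h1, mul_zero, zero_add]
        have hρnn : 0 ≤ min (dist x x ^ (1 - s)) (dist x x ^ (-s)) / dist x x ^ N :=
          div_nonneg (le_min (rpow_nonneg dist_nonneg _) (rpow_nonneg dist_nonneg _))
            (by positivity)
        have := mul_nonneg (mul_nonneg hB0 (O.Phi_abs_nonneg (u x))) hρnn
        linarith
      · have hd : 0 < dist x y := dist_pos.mpr hxy
        have hb1 : |ξ y| ≤ 1 := by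
          have h01y := hξ01 y hy
          rw [abs_of_nonneg h01y.1]; exact h01y.2
        have hab : |ξ x - ξ y| ≤ min 1 ((L:ℝ) * dist x y) := by
          refine le_min ?_ ?_
          · have h01x := hξ01 x hx
            have h01y := hξ01 y hy
            rw [abs_le]
            constructor <;> nlinarith [h01x.1, h01x.2, h01y.1, h01y.2]
          · have := hξ.dist_le_mul x hx y hy
            rwa [Real.dist_eq] at this
        exact key_ineq O hs hc2_0 hc2 hcK0 hcK (le_max_left _ _) hK1 L.2 hd hb1 hab
    -- slice-wise estimates for the kernel
    have hgx_int : ∀ x : E N, Integrable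
        (fun y : E N => min (‖y - x‖ ^ (1 - s)) (‖y - x‖ ^ (-s)) / ‖y - x‖ ^ N)
        (volume : Measure (E N)) := fun x => hgint.comp_sub_right x
    have hgx_le : ∀ x : E N,
        (∫ y in Ω, min (‖y - x‖ ^ (1 - s)) (‖y - x‖ ^ (-s)) / ‖y - x‖ ^ N) ≤ A := by
      intro x
      calc (∫ y in Ω, min (‖y - x‖ ^ (1 - s)) (‖y - x‖ ^ (-s)) / ‖y - x‖ ^ N)
          ≤ ∫ y : E N, min (‖y - x‖ ^ (1 - s)) (‖y - x‖ ^ (-s)) / ‖y - x‖ ^ N :=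
            setIntegral_le_integral (hgx_int x) (Eventually.of_forall fun y => hgnn _)
        _ = A := by
            rw [hAdef]
            exact integral_sub_right_eq_self
              (fun z : E N => min (‖z‖ ^ (1 - s)) (‖z‖ ^ (-s)) / ‖z‖ ^ N) x
    -- inner integral inequality
    have hslice : ∀ᵐ x ∂(volume.restrict Ω),
        (∫ y in Ω, O.Phi (|ξ x * u x - ξ y * u y| / dist x y ^ s) / dist x y ^ N)
          ≤ c2 * (∫ y in Ω, O.Phi (|u x - u y| / dist x y ^ s) / dist x y ^ N)
            + ((c2 * cK) * A) * O.Phi |u x| := by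
      filter_upwards [hae_int, ae_restrict_mem hΩ.measurableSet] with x hxint hxΩ
      have hgxΩ : IntegrableOn
          (fun y : E N => min (‖y - x‖ ^ (1 - s)) (‖y - x‖ ^ (-s)) / ‖y - x‖ ^ N) Ω :=
        (hgx_int x).integrableOn
      have hmaj : Integrable
          (fun y => c2 * (O.Phi (|u x - u y| / dist x y ^ s) / dist x y ^ N)
            + ((c2 * cK) * O.Phi |u x|)
              * (min (‖y - x‖ ^ (1 - s)) (‖y - x‖ ^ (-s)) / ‖y - x‖ ^ N))
          (volume.restrict Ω) :=
        (hxint.const_mul c2).add (hgxΩ.const_mul _)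
      have h1 : (∫ y in Ω, O.Phi (|ξ x * u x - ξ y * u y| / dist x y ^ s) / dist x y ^ N)
          ≤ ∫ y in Ω, (c2 * (O.Phi (|u x - u y| / dist x y ^ s) / dist x y ^ N)
            + ((c2 * cK) * O.Phi |u x|)
              * (min (‖y - x‖ ^ (1 - s)) (‖y - x‖ ^ (-s)) / ‖y - x‖ ^ N)) := by
        apply integral_mono_of_nonneg (Eventually.of_forall fun y => hfξ_nn x y) hmaj
        filter_upwards [ae_restrict_mem hΩ.measurableSet] with y hyΩ
        have := hkey x hxΩ y hyΩ
        nlinarith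
      have h2 : (∫ y in Ω, (c2 * (O.Phi (|u x - u y| / dist x y ^ s) / dist x y ^ N)
            + ((c2 * cK) * O.Phi |u x|)
              * (min (‖y - x‖ ^ (1 - s)) (‖y - x‖ ^ (-s)) / ‖y - x‖ ^ N)))
          = c2 * (∫ y in Ω, O.Phi (|u x - u y| / dist x y ^ s) / dist x y ^ N)
            + ((c2 * cK) * O.Phi |u x|)
              * ∫ y in Ω, min (‖y - x‖ ^ (1 - s)) (‖y - x‖ ^ (-s)) / ‖y - x‖ ^ N := by
        rw [integral_add (hxint.const_mul c2) (hgxΩ.const_mul _),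
          integral_const_mul, integral_const_mul]
      have h3 : ((c2 * cK) * O.Phi |u x|)
            * (∫ y in Ω, min (‖y - x‖ ^ (1 - s)) (‖y - x‖ ^ (-s)) / ‖y - x‖ ^ N)
          ≤ ((c2 * cK) * O.Phi |u x|) * A :=
        mul_le_mul_of_nonneg_left (hgx_le x) (mul_nonneg hB0 (O.Phi_abs_nonneg _))
      rw [h2] at h1
      nlinarith
    -- outer integral
    have hmaj2 : Integrable
        (fun x => c2 * (∫ y in Ω, O.Phi (|u x - u y| / dist x y ^ s) / dist x y ^ N)
          + ((c2 * cK) * A) * O.Phi |u x|) (volume.restrict Ω) :=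
      (hFint.const_mul c2).add (hu.const_mul _)
    have houter : fracModular O s Ω (fun x => ξ x * u x)
        ≤ c2 * fracModular O s Ω u + ((c2 * cK) * A) * ∫ x in Ω, O.Phi |u x| := by
      have h1 : fracModular O s Ω (fun x => ξ x * u x)
          ≤ ∫ x in Ω, (c2 * (∫ y in Ω, O.Phi (|u x - u y| / dist x y ^ s) / dist x y ^ N)
            + ((c2 * cK) * A) * O.Phi |u x|) := by
        apply integral_mono_of_nonneg
          (Eventually.of_forall fun x => integral_nonneg fun y => hfξ_nn x y) hmaj2 hslice
      have h2 : (∫ x in Ω, (c2 * (∫ y in Ω,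
              O.Phi (|u x - u y| / dist x y ^ s) / dist x y ^ N)
            + ((c2 * cK) * A) * O.Phi |u x|))
          = c2 * fracModular O s Ω u + ((c2 * cK) * A) * ∫ x in Ω, O.Phi |u x| := by
        rw [integral_add (hFint.const_mul c2) (hu.const_mul _),
          integral_const_mul, integral_const_mul]
        rfl
      rw [h2] at h1
      exact h1
    have hfracu_nn : 0 ≤ fracModular O s Ω u :=
      integral_nonneg fun x => integral_nonneg fun y => hfu_nn x y
    have hPhiu_nn : 0 ≤ ∫ x in Ω, O.Phi |u x| :=
      integral_nonneg fun x => O.Phi_abs_nonneg _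
    have ht1 := hterm1 u hu
    nlinarith [houter, ht1, hfracu_nn, hPhiu_nn, hA0, hB1, hc2_1,
      mul_nonneg hB0 hA0]
end
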